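/- arXiv:2603.15451 — 10 statements merged into one kernel-verified Lean document; each statement's English description precedes it below -/
import Mathlib

section
/- In the general quantized rational chip-firing model, firing any nonempty set strictly decreases the total chip count: for every chip configuration D : [n] → ℤ and every nonempty subset S ⊆ [n], one has Σ_{i∈[n]} φ_S(D)(i) < Σ_{i∈[n]} D(i). -/
/-- Number of non-sink neighbors of `i` (in the graph `G` on the `n` non-sink
vertices) lying in `X`. -/
def degIn {n : ℕ} (G : SimpleGraph (Fin n)) [DecidableRel G.Adj]
    (X : Finset (Fin n)) (i : Fin n) : ℕ :=
  (X.filter fun j => G.Adj i j).card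

/-- The quantized cluster-fire move `φ_S` (parameters `a, b, c`): every `i ∈ S`
loses `c + ⌊deg_{Sᶜ}(i)·a/b⌋` chips and every `j ∉ S` gains `⌊deg_S(j)·a/b⌋`. -/
def gfire {n : ℕ} (a b c : ℕ) (G : SimpleGraph (Fin n)) [DecidableRel G.Adj]
    (S : Finset (Fin n)) (D : Fin n → ℤ) : Fin n → ℤ :=
  fun i =>
    if i ∈ S then D i - (c : ℤ) - ((degIn G Sᶜ i * a / b : ℕ) : ℤ)
    else D i + ((degIn G S i * a / b : ℕ) : ℤ)

/-- superadditivity of nat division over a finset sum -/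
lemma sum_div_le' {α : Type*} (T : Finset α) (f : α → ℕ) (b : ℕ) (hb : 0 < b) :
    ∑ x ∈ T, f x / b ≤ (∑ x ∈ T, f x) / b := by
  classical
  induction T using Finset.induction_on with
  | empty => simp
  | @insert a s h ih =>
    rw [Finset.sum_insert h, Finset.sum_insert h]
    calc f a / b + ∑ x ∈ s, f x / b ≤ f a / b + (∑ x ∈ s, f x) / b := by
          exact Nat.add_le_add_left ih _
      _ ≤ (f a + ∑ x ∈ s, f x) / b := by
          rw [Nat.le_div_iff_mul_le hb, Nat.add_mul]
          exact Nat.add_le_add (Nat.div_mul_le_self _ _) (Nat.div_mul_le_self _ _)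

/-- almost-subadditivity of nat division over a nonempty finset sum -/
lemma div_sum_le' {α : Type*} (T : Finset α) (f : α → ℕ) (b : ℕ) (hb : 0 < b)
    (hT : T.Nonempty) :
    (∑ x ∈ T, f x) / b + 1 ≤ (∑ x ∈ T, f x / b) + T.card := by
  classical
  induction hT using Finset.Nonempty.cons_induction with
  | singleton a => simp
  | cons a s h hs ih =>
    rw [Finset.sum_cons, Finset.sum_cons, Finset.card_cons]
    have h1 : (f a + ∑ x ∈ s, f x) / b ≤ f a / b + (∑ x ∈ s, f x) / b + 1 := by
      have hx : f a < b * (f a / b + 1) := Nat.lt_mul_div_succ _ hb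
      have hy : (∑ x ∈ s, f x) < b * ((∑ x ∈ s, f x) / b + 1) :=
        Nat.lt_mul_div_succ _ hb
      have : f a + ∑ x ∈ s, f x < (f a / b + (∑ x ∈ s, f x) / b + 2) * b := by
        calc f a + ∑ x ∈ s, f x < b * (f a / b + 1) + b * ((∑ x ∈ s, f x) / b + 1) :=
              Nat.add_lt_add hx hy
          _ = (f a / b + (∑ x ∈ s, f x) / b + 2) * b := by ring
      have := (Nat.div_lt_iff_lt_mul hb).2 this
      omega
    omega

lemma degIn_swap {n : ℕ} (G : SimpleGraph (Fin n)) [DecidableRel G.Adj]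
    (S : Finset (Fin n)) :
    ∑ j ∈ Sᶜ, degIn G S j = ∑ i ∈ S, degIn G Sᶜ i := by
  classical
  simp only [degIn, Finset.card_filter]
  rw [Finset.sum_comm]
  apply Finset.sum_congr rfl
  intro i _
  apply Finset.sum_congr rfl
  intro j _
  simp [G.adj_comm]

/-- firing any nonempty set strictly decreases the total chip
count. -/
theorem fire_decreases_total (n a b c : ℕ) (hn : 0 < n) (ha : 0 < a) (hb : 0 < b)
    (hc : 0 < c) (G : SimpleGraph (Fin n)) [DecidableRel G.Adj]
    (D : Fin n → ℤ) (S : Finset (Fin n)) (hS : S.Nonempty) :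
    ∑ i, gfire a b c G S D i < ∑ i, D i := by
  classical
  have hsplit : ∀ f : Fin n → ℤ, ∑ i, f i = ∑ i ∈ S, f i + ∑ i ∈ Sᶜ, f i := by
    intro f; rw [Finset.sum_add_sum_compl]
  rw [hsplit (gfire a b c G S D), hsplit D]
  have h1 : ∑ i ∈ S, gfire a b c G S D i
      = ∑ i ∈ S, D i - (c : ℤ) * S.card - ∑ i ∈ S, ((degIn G Sᶜ i * a / b : ℕ) : ℤ) := by
    unfold gfire
    rw [Finset.sum_congr rfl (fun i hi => if_pos hi)]
    rw [Finset.sum_sub_distrib, Finset.sum_sub_distrib]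
    simp [mul_comm]
  have h2 : ∑ i ∈ Sᶜ, gfire a b c G S D i
      = ∑ i ∈ Sᶜ, D i + ∑ i ∈ Sᶜ, ((degIn G S i * a / b : ℕ) : ℤ) := by
    unfold gfire
    rw [Finset.sum_congr rfl (fun i hi => if_neg (by simpa using (Finset.mem_compl.1 hi)))]
    rw [Finset.sum_add_distrib]
  rw [h1, h2]
  have key : (∑ i ∈ Sᶜ, degIn G S i * a / b) < c * S.card + ∑ i ∈ S, degIn G Sᶜ i * a / b := by
    have e1 : ∑ i ∈ Sᶜ, degIn G S i * a / b ≤ (∑ i ∈ Sᶜ, degIn G S i * a) / b :=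
      sum_div_le' _ _ _ hb
    have e2 : (∑ i ∈ Sᶜ, degIn G S i * a) = ∑ i ∈ S, degIn G Sᶜ i * a := by
      rw [← Finset.sum_mul, ← Finset.sum_mul, degIn_swap]
    have e3 : (∑ i ∈ S, degIn G Sᶜ i * a) / b + 1 ≤ (∑ i ∈ S, degIn G Sᶜ i * a / b) + S.card :=
      div_sum_le' _ _ _ hb hS
    rw [e2] at e1
    have hcard : 1 ≤ S.card := Finset.card_pos.2 hS
    have : S.card ≤ c * S.card := Nat.le_mul_of_pos_left _ hc
    omega
  have keyZ : (∑ i ∈ Sᶜ, ((degIn G S i * a / b : ℕ) : ℤ))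
      < (c : ℤ) * S.card + ∑ i ∈ S, ((degIn G Sᶜ i * a / b : ℕ) : ℤ) := by
    push_cast [← Nat.cast_sum]
    exact_mod_cast key
  linarith
end

section
/- In the general quantized rational chip-firing model, for any graph G (as in the model) and any chip configuration D ≥ 0, D has exactly one 0-stabilization: every maximal sequence of legal single-vertex firing moves starting from D terminates, and all such sequences end at the same 0-stable configuration. -/
/-- One legal `k`-firing move: `D ≥ 0`, some nonempty `S` with `|S| ≤ k+1`
fires, and the result is nonnegative. -/
def gLegalKStep {n : ℕ} (a b c k : ℕ) (G : SimpleGraph (Fin n)) [DecidableRel G.Adj]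
    (D D' : Fin n → ℤ) : Prop :=
  (∀ i, 0 ≤ D i) ∧ ∃ S : Finset (Fin n), S.Nonempty ∧ S.card ≤ k + 1 ∧
    D' = gfire a b c G S D ∧ (∀ i, 0 ≤ D' i)

/-- `D` is `k`-stable: `D ≥ 0` and no `k`-firing move is legal on `D`. -/
def gKStable {n : ℕ} (a b c k : ℕ) (G : SimpleGraph (Fin n)) [DecidableRel G.Adj]
    (D : Fin n → ℤ) : Prop :=
  (∀ i, 0 ≤ D i) ∧ ∀ S : Finset (Fin n), S.Nonempty → S.card ≤ k + 1 →
    ¬ (∀ i, 0 ≤ gfire a b c G S D i)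

section Aux

variable {n : ℕ} {a b c : ℕ} {G : SimpleGraph (Fin n)} [DecidableRel G.Adj]

/-- The fixed change vector of the cluster-fire move `φ_S`. -/
def gdelta (a b c : ℕ) (G : SimpleGraph (Fin n)) [DecidableRel G.Adj]
    (S : Finset (Fin n)) (i : Fin n) : ℤ :=
  if i ∈ S then -(c : ℤ) - ((degIn G Sᶜ i * a / b : ℕ) : ℤ)
  else ((degIn G S i * a / b : ℕ) : ℤ)

lemma gfire_eq (S : Finset (Fin n)) (D : Fin n → ℤ) (i : Fin n) :
    gfire a b c G S D i = D i + gdelta a b c G S i := by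
  unfold gfire gdelta
  split <;> ring

lemma gdelta_nonneg {S : Finset (Fin n)} {i : Fin n} (h : i ∉ S) :
    0 ≤ gdelta a b c G S i := by
  unfold gdelta
  rw [if_neg h]
  positivity

lemma step_singleton {D D' : Fin n → ℤ} (h : gLegalKStep a b c 0 G D D') :
    (∀ i, 0 ≤ D i) ∧ ∃ v : Fin n, D' = gfire a b c G {v} D ∧ ∀ i, 0 ≤ D' i := by
  obtain ⟨hD, S, hne, hcard, hD', hpos⟩ := h
  obtain ⟨v, rfl⟩ := Finset.card_eq_one.mp (le_antisymm hcard (Finset.one_le_card.mpr hne))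
  exact ⟨hD, v, hD', hpos⟩

lemma diamond (D D1 D2 : Fin n → ℤ) (h1 : gLegalKStep a b c 0 G D D1)
    (h2 : gLegalKStep a b c 0 G D D2) :
    ∃ E, Relation.ReflGen (gLegalKStep a b c 0 G) D1 E ∧
      Relation.ReflTransGen (gLegalKStep a b c 0 G) D2 E := by
  obtain ⟨hD, v, rfl, h1p⟩ := step_singleton h1
  obtain ⟨-, w, rfl, h2p⟩ := step_singleton h2
  by_cases hvw : v = w
  · subst hvw
    exact ⟨_, Relation.ReflGen.refl, Relation.ReflTransGen.refl⟩
  · set E := gfire a b c G {w} (gfire a b c G {v} D) with hE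
    have hcomm : gfire a b c G {v} (gfire a b c G {w} D) = E := by
      funext i
      rw [hE, gfire_eq, gfire_eq, gfire_eq, gfire_eq]
      ring
    have hEpos : ∀ i, 0 ≤ E i := by
      intro i
      rw [hE, gfire_eq]
      by_cases hi : i = w
      · subst hi
        have h2w := h2p i
        rw [gfire_eq] at h2w
        have hv : 0 ≤ gdelta a b c G {v} i := gdelta_nonneg (by simp [Ne.symm hvw])
        rw [gfire_eq]
        linarith
      · have := h1p i
        have hw : 0 ≤ gdelta a b c G {w} i := gdelta_nonneg (by simp [hi])
        linarith
    refine ⟨E, Relation.ReflGen.single ⟨h1p, {w}, Finset.singleton_nonempty w, by simp,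
      rfl, hEpos⟩, Relation.ReflTransGen.single ⟨h2p, {v}, Finset.singleton_nonempty v,
      by simp, hcomm.symm, hEpos⟩⟩

lemma sum_gdelta_le (hb : 0 < b) (v : Fin n) :
    ∑ i, gdelta a b c G {v} i ≤ -(c : ℤ) := by
  classical
  set d : ℕ := degIn G ({v} : Finset (Fin n))ᶜ v with hd
  have key : ∀ i : Fin n, i ≠ v →
      gdelta a b c G ({v} : Finset (Fin n)) i =
        (if G.Adj i v then ((a / b : ℕ) : ℤ) else 0) := by
    intro i hi
    unfold gdelta degIn
    rw [if_neg (by simpa using hi)]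
    simp [Finset.filter_singleton]
    split <;> simp
  have hsplit : ∑ i, gdelta a b c G {v} i =
      gdelta a b c G {v} v + ∑ i ∈ Finset.univ.erase v, gdelta a b c G {v} i := by
    rw [Finset.add_sum_erase _ _ (Finset.mem_univ v)]
  have hv : gdelta a b c G {v} v = -(c : ℤ) - ((d * a / b : ℕ) : ℤ) := by
    unfold gdelta
    rw [if_pos (Finset.mem_singleton_self v), hd]
  have hrest : ∑ i ∈ Finset.univ.erase v, gdelta a b c G {v} i =
      ((Finset.univ.filter fun i => G.Adj i v).card : ℤ) * ((a / b : ℕ) : ℤ) := by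
    rw [Finset.sum_congr rfl (fun i hi => key i (Finset.ne_of_mem_erase hi))]
    rw [Finset.sum_erase _ (by simp)]
    rw [← Finset.sum_filter, Finset.sum_const, nsmul_eq_mul]
  have hcard : (Finset.univ.filter fun i => G.Adj i v).card = d := by
    rw [hd]
    unfold degIn
    congr 1
    ext i
    simp only [Finset.mem_filter, Finset.mem_univ, true_and, Finset.mem_compl,
      Finset.mem_singleton]
    constructor
    · intro h
      exact ⟨fun hiv => G.irrefl (hiv ▸ h), h.symm⟩
    · rintro ⟨-, h⟩
      exact h.symm
  have hdiv : (d : ℤ) * ((a / b : ℕ) : ℤ) ≤ ((d * a / b : ℕ) : ℤ) := by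
    have : d * (a / b) ≤ d * a / b := Nat.mul_div_le_mul_div_assoc d a b
    exact_mod_cast this
  rw [hsplit, hv, hrest, hcard]
  push_cast at hdiv ⊢
  linarith

lemma sum_step_le (hb : 0 < b) {D D' : Fin n → ℤ} (h : gLegalKStep a b c 0 G D D') :
    ∑ i, D' i ≤ (∑ i, D i) - c := by
  obtain ⟨hD, v, rfl, hpos⟩ := step_singleton h
  have : ∑ i, gfire a b c G {v} D i = (∑ i, D i) + ∑ i, gdelta a b c G {v} i := by
    rw [← Finset.sum_add_distrib]
    exact Finset.sum_congr rfl fun i _ => gfire_eq {v} D i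
  rw [this]
  have := sum_gdelta_le (a := a) (c := c) (G := G) hb v
  linarith

lemma step_measure (hb : 0 < b) (hc : 0 < c) {D D' : Fin n → ℤ}
    (h : gLegalKStep a b c 0 G D D') :
    (∑ i, D' i).toNat < (∑ i, D i).toNat := by
  have h1 := sum_step_le hb h
  have h2 : 0 ≤ ∑ i, D' i := Finset.sum_nonneg fun i _ => (step_singleton h).2.choose_spec.2 i
  omega

lemma not_stable_step {D : Fin n → ℤ} (hD : ∀ i, 0 ≤ D i)
    (h : ¬ gKStable a b c 0 G D) : ∃ D', gLegalKStep a b c 0 G D D' := by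
  unfold gKStable at h
  push_neg at h
  obtain ⟨S, hne, hcard, hpos⟩ := h hD
  exact ⟨gfire a b c G S D, hD, S, hne, hcard, rfl, hpos⟩

lemma stable_no_move {D D' : Fin n → ℤ} (hst : gKStable a b c 0 G D)
    (h : Relation.ReflTransGen (gLegalKStep a b c 0 G) D D') : D = D' := by
  rcases Relation.ReflTransGen.cases_head h with rfl | ⟨E, hDE, -⟩
  · rfl
  · obtain ⟨-, S, hne, hcard, hE, hpos⟩ := hDE
    exact absurd (hE ▸ hpos) (hst.2 S hne hcard)

lemma exists_stab (hb : 0 < b) (hc : 0 < c) :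
    ∀ N (D : Fin n → ℤ), (∀ i, 0 ≤ D i) → (∑ i, D i).toNat ≤ N →
      ∃ D', Relation.ReflTransGen (gLegalKStep a b c 0 G) D D' ∧ gKStable a b c 0 G D' := by
  intro N
  induction N with
  | zero =>
    intro D hD hle
    by_cases hst : gKStable a b c 0 G D
    · exact ⟨D, Relation.ReflTransGen.refl, hst⟩
    · obtain ⟨D1, hstep⟩ := not_stable_step hD hst
      exact absurd (step_measure hb hc hstep) (by omega)
  | succ N ih =>
    intro D hD hle
    by_cases hst : gKStable a b c 0 G D
    · exact ⟨D, Relation.ReflTransGen.refl, hst⟩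
    · obtain ⟨D1, hstep⟩ := not_stable_step hD hst
      have hm := step_measure hb hc hstep
      have hD1 : ∀ i, 0 ≤ D1 i := (step_singleton hstep).2.choose_spec.2
      obtain ⟨D', hreach, hst'⟩ := ih D1 hD1 (by omega)
      exact ⟨D', Relation.ReflTransGen.head hstep hreach, hst'⟩

end Aux

/-- every maximal sequence of legal single-vertex firings from a
nonnegative `D` terminates, and `D` has exactly one `0`-stabilization. -/
theorem unique_zeroStabilization (n a b c : ℕ) (hn : 0 < n) (ha : 0 < a)
    (hb : 0 < b) (hc : 0 < c) (G : SimpleGraph (Fin n)) [DecidableRel G.Adj]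
    (D : Fin n → ℤ) (hD : ∀ i, 0 ≤ D i) :
    (∀ f : ℕ → (Fin n → ℤ), f 0 = D →
      (∀ m, gLegalKStep a b c 0 G (f m) (f (m + 1))) → False) ∧
    (∃! D' : Fin n → ℤ,
      Relation.ReflTransGen (gLegalKStep a b c 0 G) D D' ∧ gKStable a b c 0 G D') := by
  constructor
  · intro f hf0 hstep
    have hdec : ∀ m, (∑ i, f (m + 1) i).toNat < (∑ i, f m i).toNat :=
      fun m => step_measure hb hc (hstep m)
    have hbound : ∀ m, (∑ i, f m i).toNat + m ≤ (∑ i, f 0 i).toNat := by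
      intro m
      induction m with
      | zero => omega
      | succ m ih => have := hdec m; omega
    have := hbound ((∑ i, f 0 i).toNat + 1)
    omega
  · obtain ⟨D', hreach, hst⟩ := exists_stab (G := G) hb hc (∑ i, D i).toNat D hD le_rfl
    refine ⟨D', ⟨hreach, hst⟩, ?_⟩
    rintro D'' ⟨hreach'', hst''⟩
    obtain ⟨E, hE'', hE'⟩ := Relation.church_rosser
      (fun x y z hxy hxz => diamond x y z hxy hxz) hreach'' hreach
    rw [stable_no_move hst'' hE'', stable_no_move hst hE']
end

section
/- Let a, b be coprime positive integers. Every equivalence class of the cyclic-shift relation ∼ on P(N^b E^a) has exactly a+b elements and contains exactly one (a,b)-Dyck path. Consequently, the number of (a,b)-Dyck paths equals the rational Catalan number Cat(a,b). -/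
/-- A lattice path is a list of steps, `true` = north step, `false` = east step.
`Q` is a path from `(0,0)` to `(a,b)` iff it has `b` norths and `a` easts. -/
def IsPath (a b : ℕ) (Q : List Bool) : Prop :=
  Q.count true = b ∧ Q.count false = a

/-- Level `a·y − b·x` of the lattice point reached after the first `m` steps. -/
def lvlAt (a b : ℕ) (Q : List Bool) (m : ℕ) : ℤ :=
  (a : ℤ) * ((Q.take m).count true : ℤ) - (b : ℤ) * ((Q.take m).count false : ℤ)

/-- Condition (R1): the last `k+1` north steps of `Q` start at nonnegative
level (a north step at index `m` is among the last `k+1` norths iff at most `k`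
norths occur strictly after it). -/
def R1 (a b k : ℕ) (Q : List Bool) : Prop :=
  ∀ m < Q.length, Q.getD m false = true → (Q.drop (m + 1)).count true ≤ k →
    0 ≤ lvlAt a b Q m

/-- `Q` is an `(a,b)`-Dyck path: every north step starts at nonnegative level. -/
def IsDyck (a b : ℕ) (Q : List Bool) : Prop :=
  ∀ m < Q.length, Q.getD m false = true → 0 ≤ lvlAt a b Q m

/-- `Q` is `k`-skeletal: (R1) holds, and (R2) every cyclic shift of `Q` at a
lattice point of positive level fails (R1).  (The cyclic shift of `Q` at the
point reached after `m` steps is `Q.rotate m`.) -/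
def SkeletalPath (a b k : ℕ) (Q : List Bool) : Prop :=
  R1 a b k Q ∧ ∀ m ≤ Q.length, 0 < lvlAt a b Q m → ¬ R1 a b k (Q.rotate m)

namespace RatCatAux

lemma count_tf (l : List Bool) : l.count true + l.count false = l.length := by
  induction l with
  | nil => simp
  | cons h t ih => cases h <;> simp [List.count_cons] <;> omega

lemma length_of_isPath {a b : ℕ} {Q : List Bool} (hQ : IsPath a b Q) :
    Q.length = a + b := by
  obtain ⟨h1, h2⟩ := hQ
  have := count_tf Q
  omega

lemma lvl_zero (a b : ℕ) (Q : List Bool) : lvlAt a b Q 0 = 0 := by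
  simp [lvlAt]

lemma lvl_end {a b : ℕ} {Q : List Bool} (hQ : IsPath a b Q) :
    lvlAt a b Q Q.length = 0 := by
  obtain ⟨h1, h2⟩ := hQ
  unfold lvlAt
  rw [List.take_length, h1, h2]
  ring

lemma isPath_rotate {a b : ℕ} {Q : List Bool} (hQ : IsPath a b Q) (m : ℕ) :
    IsPath a b (Q.rotate m) := by
  obtain ⟨h1, h2⟩ := hQ
  exact ⟨by rw [(Q.rotate_perm m).count_eq]; exact h1,
    by rw [(Q.rotate_perm m).count_eq]; exact h2⟩

/-- the level is `(a+b)·(#norths in prefix) - b·m`. -/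
lemma lvl_formula {a b : ℕ} {Q : List Bool} {m : ℕ} (hm : m ≤ Q.length) :
    lvlAt a b Q m = ((a : ℤ) + b) * ((Q.take m).count true : ℤ) - (b : ℤ) * m := by
  have h1 : (Q.take m).count true + (Q.take m).count false = m := by
    rw [count_tf, List.length_take]; omega
  have h1' : ((Q.take m).count false : ℤ) = (m : ℤ) - (Q.take m).count true := by
    omega
  simp only [lvlAt]
  rw [h1']; ring

/-- levels at distinct indices `< a+b` are distinct (key use of coprimality). -/
lemma lvl_inj {a b : ℕ} (ha : 0 < a) (hab : a.Coprime b) {Q : List Bool} (hQ : IsPath a b Q)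
    {i j : ℕ} (hi : i < a + b) (hj : j < a + b)
    (h : lvlAt a b Q i = lvlAt a b Q j) : i = j := by
  have hlen := length_of_isPath hQ
  rw [lvl_formula (by omega), lvl_formula (by omega)] at h
  have key : ((a : ℤ) + b) * (((Q.take i).count true : ℤ) - (Q.take j).count true)
      = (b : ℤ) * ((i : ℤ) - j) := by linarith
  have hcop : IsCoprime ((a : ℤ) + b) (b : ℤ) := by
    have hnat : Nat.Coprime (a + b) b := Nat.coprime_add_self_left.mpr hab
    have h2 := Nat.isCoprime_iff_coprime.mpr hnat
    push_cast at h2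
    exact h2
  have hdvd : ((a : ℤ) + b) ∣ (b : ℤ) * ((i : ℤ) - j) := ⟨_, key.symm⟩
  have hdvd2 : ((a : ℤ) + b) ∣ ((i : ℤ) - j) := hcop.dvd_of_dvd_mul_left hdvd
  obtain ⟨k, hk⟩ := hdvd2
  have hposn : (0 : ℤ) < (a : ℤ) + b := by positivity
  have hii : (i : ℤ) < (a : ℤ) + b := by omega
  have hjj : (j : ℤ) < (a : ℤ) + b := by omega
  have hk0 : k = 0 := by
    rcases lt_trichotomy k 0 with h | h | h
    · have h1 : k ≤ -1 := by omega
      nlinarith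
    · exact h
    · have h1 : (1 : ℤ) ≤ k := h
      nlinarith
  rw [hk0, mul_zero] at hk
  omega

lemma lvl_succ {a b : ℕ} {Q : List Bool} {m : ℕ} (hm : m < Q.length) :
    lvlAt a b Q (m + 1) =
      lvlAt a b Q m + (if Q.getD m false = true then (a : ℤ) else -(b : ℤ)) := by
  have ht : Q.take (m + 1) = Q.take m ++ [Q[m]] := (List.take_concat_get' Q m hm).symm
  have hg : Q.getD m false = Q[m] := List.getD_eq_getElem Q false hm
  rw [lvlAt, lvlAt, ht, List.count_append, List.count_append, hg]
  cases hQm : Q[m] <;> simp <;> push_cast <;> ring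

/-- a Dyck path stays at nonnegative levels everywhere. -/
lemma dyck_nonneg {a b : ℕ} {Q : List Bool} (hQ : IsPath a b Q)
    (hD : IsDyck a b Q) : ∀ j ≤ Q.length, 0 ≤ lvlAt a b Q j := by
  have key : ∀ k j, j ≤ Q.length → Q.length - j ≤ k → 0 ≤ lvlAt a b Q j := by
    intro k
    induction k with
    | zero =>
      intro j hj hk
      have : j = Q.length := by omega
      rw [this, lvl_end hQ]
    | succ k ih =>
      intro j hj hk
      rcases eq_or_lt_of_le hj with h | h
      · rw [h, lvl_end hQ]
      · have hs := lvl_succ (a := a) (b := b) h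
        by_cases hg : Q.getD j false = true
        · exact hD j h hg
        · have h2 := ih (j + 1) h (by omega)
          rw [if_neg hg] at hs
          have hb : (0 : ℤ) ≤ b := by positivity
          linarith
  exact fun j hj => key (Q.length - j) j hj le_rfl

/-- the fundamental transформation formula for levels of rotations. -/
lemma lvl_rotate {a b : ℕ} {Q : List Bool} (hQ : IsPath a b Q)
    {m j : ℕ} (hm : m ≤ a + b) (hj : j ≤ a + b) :
    lvlAt a b (Q.rotate m) j =
      (if m + j ≤ a + b then lvlAt a b Q (m + j) else lvlAt a b Q (m + j - (a + b)))
        - lvlAt a b Q m := by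
  have hlen := length_of_isPath hQ
  have hrot : Q.rotate m = Q.drop m ++ Q.take m :=
    List.rotate_eq_drop_append_take (by omega)
  have hdroplen : (Q.drop m).length = a + b - m := by simp [hlen]
  have htake : (Q.rotate m).take j = (Q.drop m).take j ++ (Q.take m).take (j - (a + b - m)) := by
    rw [hrot, List.take_append, hdroplen]
  have hsplit : ∀ c : Bool, (Q.take (m + j)).count c
      = (Q.take m).count c + ((Q.drop m).take j).count c := by
    intro c
    rw [List.take_add, List.count_append]
  by_cases hcase : m + j ≤ a + b
  · rw [if_pos hcase]
    have h0 : j - (a + b - m) = 0 := by omega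
    simp only [lvlAt]
    rw [htake, h0]
    simp only [List.take_zero, List.append_nil, List.count_append]
    have h1 := hsplit true
    have h2 := hsplit false
    push_cast [h1, h2]
    ring
  · rw [if_neg hcase]
    have hdall : (Q.drop m).take j = Q.drop m :=
      List.take_of_length_le (by omega)
    have h3 : (Q.take m).take (j - (a + b - m)) = Q.take (m + j - (a + b)) := by
      rw [List.take_take]
      congr 1
      omega
    have hdc : ∀ c : Bool, (Q.drop m).count c = Q.count c - (Q.take m).count c := by
      intro c
      have : (Q.take m).count c + (Q.drop m).count c = Q.count c := by
        rw [← List.count_append, List.take_append_drop]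
      omega
    have hcle : ∀ c : Bool, (Q.take m).count c ≤ Q.count c := by
      intro c
      have := hdc c
      have : (Q.take m).count c + (Q.drop m).count c = Q.count c := by
        rw [← List.count_append, List.take_append_drop]
      omega
    obtain ⟨hT, hF⟩ := hQ
    simp only [lvlAt]
    rw [htake, hdall, h3, List.count_append, List.count_append]
    have e1 : ((Q.drop m).count true : ℤ) = (b : ℤ) - (Q.take m).count true := by
      rw [hdc true]; push_cast [Nat.cast_sub (hcle true)]; rw [hT]
    have e2 : ((Q.drop m).count false : ℤ) = (a : ℤ) - (Q.take m).count false := by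
      rw [hdc false]; push_cast [Nat.cast_sub (hcle false)]; rw [hF]
    push_cast
    rw [e1, e2]
    ring

/-- reaching any given point of the base path along the rotation. -/
lemma lvl_rotate_pt {a b : ℕ} {Q : List Bool} (hQ : IsPath a b Q)
    {m p : ℕ} (hm : m < a + b) (hp : p < a + b) :
    ∃ t ≤ a + b, lvlAt a b (Q.rotate m) t = lvlAt a b Q p - lvlAt a b Q m := by
  have hlen := length_of_isPath hQ
  by_cases hc : m ≤ p
  · refine ⟨p - m, by omega, ?_⟩
    rw [lvl_rotate hQ (by omega) (by omega)]
    rw [if_pos (by omega)]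
    congr 2
    omega
  · refine ⟨p + (a + b) - m, by omega, ?_⟩
    rw [lvl_rotate hQ (by omega) (by omega)]
    by_cases hp0 : p = 0
    · subst hp0
      rw [if_pos (by omega)]
      have hend : lvlAt a b Q (a + b) = 0 := by rw [← hlen]; exact lvl_end hQ
      rw [show m + (0 + (a+b) - m) = a + b by omega, hend, lvl_zero]
    · rw [if_neg (by omega)]
      congr 2
      omega

end RatCatAux

open RatCatAux in
/-- counting lists with prescribed numbers of `true`s and `false`s. -/
lemma ncard_paths_aux : ∀ t x y : ℕ, x + y = t →
    {Q : List Bool | Q.count true = y ∧ Q.count false = x}.ncard = (x + y).choose y := by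
  intro t
  induction t with
  | zero =>
    intro x y hxy
    have hx : x = 0 := by omega
    have hy : y = 0 := by omega
    subst hx; subst hy
    have : {Q : List Bool | Q.count true = 0 ∧ Q.count false = 0} = {([] : List Bool)} := by
      ext Q
      simp only [Set.mem_setOf_eq, Set.mem_singleton_iff]
      constructor
      · rintro ⟨h1, h2⟩
        have := count_tf Q
        rw [h1, h2] at this
        exact List.length_eq_zero_iff.mp (by omega)
      · rintro rfl; simp
    rw [this, Set.ncard_singleton]
    simp
  | succ t ih =>
    intro x y hxy
    rcases Nat.eq_zero_or_pos y with hy | hy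
    · subst hy
      have : {Q : List Bool | Q.count true = 0 ∧ Q.count false = x}
          = {List.replicate x false} := by
        ext Q
        simp only [Set.mem_setOf_eq, Set.mem_singleton_iff]
        constructor
        · rintro ⟨h1, h2⟩
          rw [List.eq_replicate_iff]
          refine ⟨by have := count_tf Q; omega, fun u hu => ?_⟩
          cases u
          · rfl
          · exfalso
            have : 0 < Q.count true := List.count_pos_iff.mpr hu
            omega
        · rintro rfl
          refine ⟨?_, ?_⟩ <;> simp [List.count_replicate]
      rw [this, Set.ncard_singleton]
      simp
    rcases Nat.eq_zero_or_pos x with hx | hx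
    · subst hx
      have : {Q : List Bool | Q.count true = y ∧ Q.count false = 0}
          = {List.replicate y true} := by
        ext Q
        simp only [Set.mem_setOf_eq, Set.mem_singleton_iff]
        constructor
        · rintro ⟨h1, h2⟩
          rw [List.eq_replicate_iff]
          refine ⟨by have := count_tf Q; omega, fun u hu => ?_⟩
          cases u
          · exfalso
            have : 0 < Q.count false := List.count_pos_iff.mpr hu
            omega
          · rfl
        · rintro rfl
          refine ⟨?_, ?_⟩ <;> simp [List.count_replicate]
      rw [this, Set.ncard_singleton]
      simp
    -- now x > 0, y > 0
    obtain ⟨x', rfl⟩ : ∃ x', x = x' + 1 := ⟨x - 1, by omega⟩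
    obtain ⟨y', rfl⟩ : ∃ y', y = y' + 1 := ⟨y - 1, by omega⟩
    have hfin : ∀ u v : ℕ, {Q : List Bool | Q.count true = v ∧ Q.count false = u}.Finite := by
      intro u v
      apply Set.Finite.subset (List.finite_length_eq Bool (u + v))
      intro Q ⟨h1, h2⟩
      have := count_tf Q
      simp only [Set.mem_setOf_eq]
      omega
    have hsplit : {Q : List Bool | Q.count true = y' + 1 ∧ Q.count false = x' + 1}
        = (List.cons true '' {Q | Q.count true = y' ∧ Q.count false = x' + 1})
          ∪ (List.cons false '' {Q | Q.count true = y' + 1 ∧ Q.count false = x'}) := by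
      ext Q
      simp only [Set.mem_setOf_eq, Set.mem_union, Set.mem_image]
      constructor
      · rintro ⟨h1, h2⟩
        match Q with
        | [] => simp at h1
        | true :: T =>
          left
          refine ⟨T, ⟨?_, ?_⟩, rfl⟩ <;> simp [List.count_cons] at h1 h2 ⊢ <;> omega
        | false :: T =>
          right
          refine ⟨T, ⟨?_, ?_⟩, rfl⟩ <;> simp [List.count_cons] at h1 h2 ⊢ <;> omega
      · rintro (⟨T, ⟨h1, h2⟩, rfl⟩ | ⟨T, ⟨h1, h2⟩, rfl⟩) <;>
          simp [List.count_cons, h1, h2]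
    have hdisj : Disjoint (List.cons true '' {Q | Q.count true = y' ∧ Q.count false = x' + 1})
        (List.cons false '' {Q | Q.count true = y' + 1 ∧ Q.count false = x'}) := by
      rw [Set.disjoint_left]
      rintro q ⟨T, _, rfl⟩ ⟨T', _, h⟩
      simp at h
    rw [hsplit, Set.ncard_union_eq hdisj ((hfin (x' + 1) y').image _)
      ((hfin x' (y' + 1)).image _)]
    rw [Set.ncard_image_of_injective _ (List.cons_injective),
      Set.ncard_image_of_injective _ (List.cons_injective),
      ih (x' + 1) y' (by omega), ih x' (y' + 1) (by omega)]
    have hcs := Nat.choose_succ_succ (x' + y' + 1) y'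
    have e1 : x' + 1 + y' = x' + y' + 1 := by omega
    have e2 : x' + (y' + 1) = x' + y' + 1 := by omega
    have e3 : x' + 1 + (y' + 1) = x' + y' + 1 + 1 := by omega
    rw [e1, e2, e3, hcs]

open RatCatAux in
/-- each cyclic class has exactly `a+b` elements. -/
lemma class_ncard {a b : ℕ} (ha : 0 < a) (hb : 0 < b) (hab : a.Coprime b)
    {P : List Bool} (hP : IsPath a b P) :
    {Q : List Bool | ∃ m ≤ P.length, Q = P.rotate m}.ncard = a + b := by
  have hlen := length_of_isPath hP
  set n := a + b with hn
  have hnpos : 0 < n := by omega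
  -- the unique minimal-level index
  obtain ⟨m₀, hm₀mem, hmin⟩ := (Finset.range n).exists_min_image (lvlAt a b P)
    ⟨0, Finset.mem_range.mpr hnpos⟩
  have hm₀ : m₀ < n := Finset.mem_range.mp hm₀mem
  have hminle : ∀ x ≤ n, lvlAt a b P m₀ ≤ lvlAt a b P x := by
    intro x hx
    rcases eq_or_lt_of_le hx with h | h
    · have hend : lvlAt a b P n = 0 := by rw [← hlen]; exact lvl_end hP
      rw [h, hend, ← lvl_zero a b P]
      exact hmin 0 (Finset.mem_range.mpr hnpos)
    · exact hmin x (Finset.mem_range.mpr h)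
  -- rotation is injective on indices < n
  have hinj : ∀ i < n, ∀ j < n, P.rotate i = P.rotate j → i = j := by
    intro i hi j hj hij
    have key : ∀ u < n, ∀ v < n, P.rotate u = P.rotate v →
        lvlAt a b P u ≤ lvlAt a b P v := by
      intro u hu v hv huv
      obtain ⟨t, ht, hteq⟩ := lvl_rotate_pt hP hu hm₀
      have h2 : lvlAt a b (P.rotate v) t = lvlAt a b P m₀ - lvlAt a b P u := by
        rw [← huv, hteq]
      rw [lvl_rotate hP (le_of_lt hv) ht] at h2
      by_cases hc : v + t ≤ n
      · rw [if_pos hc] at h2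
        have := hminle (v + t) hc
        linarith
      · rw [if_neg hc] at h2
        have h5 : v + t - n ≤ n := by omega
        have := hminle (v + t - n) h5
        linarith
    have h1 := key i hi j hj hij
    have h2 := key j hj i hi hij.symm
    exact lvl_inj ha hab hP hi hj (le_antisymm h1 h2)
  have hset : {Q : List Bool | ∃ m ≤ P.length, Q = P.rotate m}
      = ↑((Finset.range n).image (fun m => P.rotate m)) := by
    ext Q
    simp only [Set.mem_setOf_eq, Finset.coe_image, Set.mem_image, Finset.mem_coe,
      Finset.mem_range]
    constructor
    · rintro ⟨m, hm, rfl⟩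
      rcases eq_or_lt_of_le hm with h | h
      · exact ⟨0, hnpos, by rw [h, List.rotate_length, List.rotate_zero]⟩
      · exact ⟨m, by omega, rfl⟩
    · rintro ⟨m, hm, rfl⟩
      exact ⟨m, by omega, rfl⟩
  rw [hset, Set.ncard_coe_finset, Finset.card_image_of_injOn, Finset.card_range]
  intro i hi j hj hij
  exact hinj i (Finset.mem_range.mp hi) j (Finset.mem_range.mp hj) hij

open RatCatAux in
/-- each cyclic class contains exactly one Dyck path. -/
lemma exists_unique_dyck {a b : ℕ} (ha : 0 < a) (hb : 0 < b) (hab : a.Coprime b)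
    {P : List Bool} (hP : IsPath a b P) :
    ∃! Q : List Bool, (∃ m ≤ P.length, Q = P.rotate m) ∧ IsDyck a b Q := by
  have hlen := length_of_isPath hP
  set n := a + b with hn
  have hnpos : 0 < n := by omega
  obtain ⟨m₀, hm₀mem, hmin⟩ := (Finset.range n).exists_min_image (lvlAt a b P)
    ⟨0, Finset.mem_range.mpr hnpos⟩
  have hm₀ : m₀ < n := Finset.mem_range.mp hm₀mem
  have hminle : ∀ x ≤ n, lvlAt a b P m₀ ≤ lvlAt a b P x := by
    intro x hx
    rcases eq_or_lt_of_le hx with h | h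
    · have hend : lvlAt a b P n = 0 := by rw [← hlen]; exact lvl_end hP
      rw [h, hend, ← lvl_zero a b P]
      exact hmin 0 (Finset.mem_range.mpr hnpos)
    · exact hmin x (Finset.mem_range.mpr h)
  refine ⟨P.rotate m₀, ⟨⟨m₀, by omega, rfl⟩, ?_⟩, ?_⟩
  · -- the rotation at the minimum is Dyck
    intro m hm _
    have hmlen : m ≤ n := by
      have : (P.rotate m₀).length = P.length := List.length_rotate P m₀
      omega
    rw [lvl_rotate hP (le_of_lt hm₀) hmlen]
    by_cases hc : m₀ + m ≤ n
    · rw [if_pos hc]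
      have := hminle (m₀ + m) hc
      linarith
    · rw [if_neg hc]
      have := hminle (m₀ + m - n) (by omega)
      rw [hn] at this
      linarith
  · -- uniqueness
    rintro Q ⟨⟨m, hm, rfl⟩, hD⟩
    have hm' : m % n < n := Nat.mod_lt _ hnpos
    have hrw : P.rotate m = P.rotate (m % n) := by
      conv_lhs => rw [← List.rotate_mod, hlen]
    have hnneg := dyck_nonneg (isPath_rotate hP m) hD
    have heq : m % n = m₀ := by
      obtain ⟨t, ht, hteq⟩ := lvl_rotate_pt hP hm' hm₀
      rw [← hrw] at hteq
      have h0 : 0 ≤ lvlAt a b (P.rotate m) t := by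
        apply hnneg
        rw [List.length_rotate]
        omega
      rw [hteq] at h0
      have h1 := hminle (m % n) (le_of_lt hm')
      exact lvl_inj ha hab hP hm' hm₀ (le_antisymm (by linarith) h1)
    rw [hrw, heq]

open RatCatAux in
/-- every cyclic-shift equivalence class in `P(N^b E^a)` has
exactly `a+b` elements and contains exactly one `(a,b)`-Dyck path; hence the
number of `(a,b)`-Dyck paths is the rational Catalan number. -/
theorem cyclic_classes_and_dyck_count (a b : ℕ) (ha : 0 < a) (hb : 0 < b)
    (hab : a.Coprime b) :
    (∀ P : List Bool, IsPath a b P →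
      {Q : List Bool | ∃ m ≤ P.length, Q = P.rotate m}.ncard = a + b ∧
      (∃! Q : List Bool, (∃ m ≤ P.length, Q = P.rotate m) ∧ IsDyck a b Q)) ∧
    {Q : List Bool | IsPath a b Q ∧ IsDyck a b Q}.ncard =
      (a + b).factorial / (a.factorial * b.factorial * (a + b)) := by
  have hnpos : 0 < a + b := by omega
  constructor
  · intro P hP
    exact ⟨class_ncard ha hb hab hP, exists_unique_dyck ha hb hab hP⟩
  -- counting
  have hPfin : {Q : List Bool | IsPath a b Q}.Finite := by
    apply Set.Finite.subset (List.finite_length_eq Bool (a + b))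
    intro Q hQ
    exact length_of_isPath hQ
  have hDfin : {Q : List Bool | IsPath a b Q ∧ IsDyck a b Q}.Finite :=
    hPfin.subset (fun Q hQ => hQ.1)
  -- bijection (D × [0, a+b)) → paths
  have hbij : Set.BijOn (fun p : List Bool × ℕ => p.1.rotate p.2)
      ({Q : List Bool | IsPath a b Q ∧ IsDyck a b Q} ×ˢ Set.Iio (a + b))
      {Q : List Bool | IsPath a b Q} := by
    refine ⟨?_, ?_, ?_⟩
    · rintro ⟨Q, m⟩ ⟨hQ, _⟩
      exact isPath_rotate hQ.1 m
    · rintro ⟨Q, i⟩ hQmem ⟨Q', j⟩ hQ'mem heq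
      obtain ⟨hQD, hi⟩ := Set.mem_prod.mp hQmem
      obtain ⟨hQ'D, hj⟩ := Set.mem_prod.mp hQ'mem
      simp only [Set.mem_setOf_eq] at hQD hQ'D
      simp only [Set.mem_Iio] at hi hj
      simp only at heq
      have hlQ : Q.length = a + b := length_of_isPath hQD.1
      have hlQ' : Q'.length = a + b := length_of_isPath hQ'D.1
      have hQQ' : Q' = Q.rotate ((i + (a + b - j)) % (a + b)) := by
        have h1 : (Q'.rotate j).rotate (a + b - j) = Q' := by
          rw [List.rotate_rotate, show j + (a + b - j) = a + b by omega, ← hlQ',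
            List.rotate_length]
        rw [← h1, ← heq, List.rotate_rotate, ← List.rotate_mod, hlQ]
      have hQ'class : (∃ m ≤ Q.length, Q' = Q.rotate m) ∧ IsDyck a b Q' := by
        refine ⟨⟨(i + (a + b - j)) % (a + b), ?_, hQQ'⟩, hQ'D.2⟩
        rw [hlQ]
        exact le_of_lt (Nat.mod_lt _ hnpos)
      have hQclass : (∃ m ≤ Q.length, Q = Q.rotate m) ∧ IsDyck a b Q :=
        ⟨⟨0, by omega, (List.rotate_zero Q).symm⟩, hQD.2⟩
      obtain ⟨W, _, hWuniq⟩ := exists_unique_dyck ha hb hab hQD.1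
      have hQ'eqQ : Q' = Q := by
        rw [hWuniq Q' hQ'class, hWuniq Q hQclass]
      rw [hQ'eqQ] at heq
      rw [Prod.mk.injEq]
      refine ⟨hQ'eqQ.symm, ?_⟩
      -- now Q.rotate i = Q.rotate j with i, j < a + b
      obtain ⟨m₀, hm₀mem, hmin⟩ := (Finset.range (a + b)).exists_min_image (lvlAt a b Q)
        ⟨0, Finset.mem_range.mpr hnpos⟩
      have hm₀ : m₀ < a + b := Finset.mem_range.mp hm₀mem
      have hminle : ∀ x ≤ a + b, lvlAt a b Q m₀ ≤ lvlAt a b Q x := by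
        intro x hx
        rcases eq_or_lt_of_le hx with h | h
        · have hend : lvlAt a b Q (a + b) = 0 := by rw [← hlQ]; exact lvl_end hQD.1
          rw [h, hend, ← lvl_zero a b Q]
          exact hmin 0 (Finset.mem_range.mpr hnpos)
        · exact hmin x (Finset.mem_range.mpr h)
      have key : ∀ u < a + b, ∀ v < a + b, Q.rotate u = Q.rotate v →
          lvlAt a b Q u ≤ lvlAt a b Q v := by
        intro u hu v hv huv
        obtain ⟨t, ht, hteq⟩ := lvl_rotate_pt hQD.1 hu hm₀
        have h2 : lvlAt a b (Q.rotate v) t = lvlAt a b Q m₀ - lvlAt a b Q u := by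
          rw [← huv, hteq]
        rw [lvl_rotate hQD.1 (le_of_lt hv) ht] at h2
        by_cases hc : v + t ≤ a + b
        · rw [if_pos hc] at h2
          have := hminle (v + t) hc
          linarith
        · rw [if_neg hc] at h2
          have := hminle (v + t - (a + b)) (by omega)
          linarith
      exact lvl_inj ha hab hQD.1 hi hj
        (le_antisymm (key i hi j hj heq) (key j hj i hi heq.symm))
    · intro P hPm
      simp only [Set.mem_setOf_eq] at hPm
      obtain ⟨W, ⟨⟨m₀, hm₀, hWeq⟩, hWD⟩, _⟩ := exists_unique_dyck ha hb hab hPm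
      have hlP : P.length = a + b := length_of_isPath hPm
      have hWpath : IsPath a b W := hWeq ▸ isPath_rotate hPm m₀
      have hlW : W.length = a + b := length_of_isPath hWpath
      refine ⟨(W, (a + b - m₀) % (a + b)), ⟨⟨hWpath, hWD⟩,
        Set.mem_Iio.mpr (Nat.mod_lt _ hnpos)⟩, ?_⟩
      simp only
      have h2 : W.rotate ((a + b - m₀) % (a + b)) = W.rotate (a + b - m₀) := by
        conv_rhs => rw [← List.rotate_mod]
        rw [hlW]
      rw [h2, hWeq, List.rotate_rotate, show m₀ + (a + b - m₀) = a + b by omega,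
        ← hlP, List.rotate_length]
  -- cardinalities
  have hcard1 : {Q : List Bool | IsPath a b Q}.ncard = (a + b).choose b := by
    have : {Q : List Bool | IsPath a b Q}
        = {Q : List Bool | Q.count true = b ∧ Q.count false = a} := rfl
    rw [this, ncard_paths_aux (a + b) a b rfl]
  have hprod : ({Q : List Bool | IsPath a b Q ∧ IsDyck a b Q} ×ˢ Set.Iio (a + b)).ncard
      = {Q : List Bool | IsPath a b Q ∧ IsDyck a b Q}.ncard * (a + b) := by
    rw [← Nat.card_coe_set_eq,
      Nat.card_congr (Equiv.Set.prod {Q : List Bool | IsPath a b Q ∧ IsDyck a b Q}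
        (Set.Iio (a + b))),
      Nat.card_prod, Nat.card_coe_set_eq, Nat.card_coe_set_eq]
    congr 1
    rw [← Finset.coe_range, Set.ncard_coe_finset, Finset.card_range]
  have hcard2 : {Q : List Bool | IsPath a b Q}.ncard
      = {Q : List Bool | IsPath a b Q ∧ IsDyck a b Q}.ncard * (a + b) := by
    rw [← hbij.image_eq, Set.ncard_image_of_injOn hbij.injOn, hprod]
  have hchoose : (a + b).choose b * b.factorial * a.factorial = (a + b).factorial := by
    have := Nat.choose_mul_factorial_mul_factorial (Nat.le_add_left b a)
    simpa [Nat.add_sub_cancel] using this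
  have hfinal : (a + b).factorial
      = {Q : List Bool | IsPath a b Q ∧ IsDyck a b Q}.ncard
        * (a.factorial * b.factorial * (a + b)) := by
    rw [← hchoose, ← hcard1, hcard2]
    ring
  rw [hfinal, Nat.mul_div_cancel]
  positivity
end

section
/- Let a, b be coprime positive integers and fix k with 0 ≤ k < b. For each path P ∈ P(N^b E^a), there is exactly one k-skeletal path Q such that Q = P_v for some lattice point v on P; equivalently, every equivalence class of the cyclic-shift relation ∼ contains exactly one k-skeletal path. -/
namespace USK

lemma count_add_length (l : List Bool) : l.count true + l.count false = l.length := by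
  induction l with
  | nil => simp
  | cons h t ih => cases h <;> simp [List.count_cons] <;> omega

lemma count_take_le_take (l : List Bool) (t : Bool) {m n : ℕ} (h : m ≤ n) :
    (l.take m).count t ≤ (l.take n).count t := by
  have e : l.take m = (l.take n).take m := by rw [List.take_take, Nat.min_eq_left h]
  rw [e]; exact (List.take_sublist _ _).count_le _

lemma count_take_le (l : List Bool) (t : Bool) (m : ℕ) :
    (l.take m).count t ≤ l.count t := (List.take_sublist _ _).count_le _

lemma lvl_zero (a b : ℕ) (Q : List Bool) : lvlAt a b Q 0 = 0 := by simp [lvlAt]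

lemma lvl_length (a b : ℕ) (Q : List Bool) (hQ : IsPath a b Q) :
    lvlAt a b Q Q.length = 0 := by
  simp [lvlAt, List.take_length, hQ.1, hQ.2]; ring

lemma count_rotate_take_le (Q : List Bool) (t : Bool) {m n : ℕ}
    (hm : m ≤ Q.length) (h : m + n ≤ Q.length) :
    ((Q.rotate m).take n).count t + (Q.take m).count t = (Q.take (m + n)).count t := by
  rw [List.rotate_eq_drop_append_take hm,
    List.take_append_of_le_length (by rw [List.length_drop]; omega),
    List.take_add, List.count_append]
  omega

lemma count_rotate_take_ge (Q : List Bool) (t : Bool) {m n : ℕ}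
    (hm : m ≤ Q.length) (hn : n ≤ Q.length) (h : Q.length ≤ m + n) :
    ((Q.rotate m).take n).count t + (Q.take m).count t
      = Q.count t + (Q.take (m + n - Q.length)).count t := by
  rw [List.rotate_eq_drop_append_take hm, List.take_append,
    List.take_of_length_le (by rw [List.length_drop]; omega),
    List.length_drop, List.take_take]
  have e1 : n - (Q.length - m) = m + n - Q.length := by omega
  have e2 : min (n - (Q.length - m)) m = m + n - Q.length := by omega
  rw [List.count_append, e2]
  have : Q.count t = (Q.take m).count t + (Q.drop m).count t := by
    conv_lhs => rw [← List.take_append_drop m Q]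
    rw [List.count_append]
  omega

lemma lvl_rotate_le (a b : ℕ) (Q : List Bool) {m n : ℕ}
    (hm : m ≤ Q.length) (h : m + n ≤ Q.length) :
    lvlAt a b (Q.rotate m) n = lvlAt a b Q (m + n) - lvlAt a b Q m := by
  have h1 := count_rotate_take_le Q true hm h
  have h2 := count_rotate_take_le Q false hm h
  simp only [lvlAt]
  have h1' : (((Q.rotate m).take n).count true : ℤ) + ((Q.take m).count true : ℤ)
      = ((Q.take (m+n)).count true : ℤ) := by exact_mod_cast h1
  have h2' : (((Q.rotate m).take n).count false : ℤ) + ((Q.take m).count false : ℤ)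
      = ((Q.take (m+n)).count false : ℤ) := by exact_mod_cast h2
  linear_combination (a : ℤ) * h1' - (b : ℤ) * h2'

lemma lvl_rotate_ge (a b : ℕ) (Q : List Bool) (hQ : IsPath a b Q) {m n : ℕ}
    (hm : m ≤ Q.length) (hn : n ≤ Q.length) (h : Q.length ≤ m + n) :
    lvlAt a b (Q.rotate m) n = lvlAt a b Q (m + n - Q.length) - lvlAt a b Q m := by
  have h1 := count_rotate_take_ge Q true hm hn h
  have h2 := count_rotate_take_ge Q false hm hn h
  rw [hQ.1] at h1; rw [hQ.2] at h2
  simp only [lvlAt]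
  have h1' : (((Q.rotate m).take n).count true : ℤ) + ((Q.take m).count true : ℤ)
      = (b : ℤ) + ((Q.take (m+n-Q.length)).count true : ℤ) := by exact_mod_cast h1
  have h2' : (((Q.rotate m).take n).count false : ℤ) + ((Q.take m).count false : ℤ)
      = (a : ℤ) + ((Q.take (m+n-Q.length)).count false : ℤ) := by exact_mod_cast h2
  linear_combination (a : ℤ) * h1' - (b : ℤ) * h2'

/-- Levels at positions `< L` are injective when `gcd(a,b)=1`. -/
lemma lvl_inj (a b : ℕ) (ha : 0 < a) (hb : 0 < b) (hab : a.Coprime b)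
    (Q : List Bool) (hQ : IsPath a b Q) {m₁ m₂ : ℕ}
    (h1 : m₁ < Q.length) (h2 : m₂ < Q.length)
    (h : lvlAt a b Q m₁ = lvlAt a b Q m₂) : m₁ = m₂ := by
  have key : ∀ p q : ℕ, p ≤ q → q < Q.length → lvlAt a b Q p = lvlAt a b Q q → p = q := by
    intro p q hpq hq hlvl
    by_contra hne
    have hpq' : p < q := lt_of_le_of_ne hpq hne
    set c1p := (Q.take p).count true
    set c1q := (Q.take q).count true
    set c0p := (Q.take p).count false
    set c0q := (Q.take q).count false
    have m1 : c1p ≤ c1q := count_take_le_take Q true hpq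
    have m0 : c0p ≤ c0q := count_take_le_take Q false hpq
    have hlen : ∀ r : ℕ, r ≤ Q.length →
        (Q.take r).count true + (Q.take r).count false = r := by
      intro r hr
      rw [count_add_length, List.length_take]; omega
    have hp := hlen p (by omega)
    have hqq := hlen q (by omega)
    have heq : a * (c1q - c1p) = b * (c0q - c0p) := by
      have : (a : ℤ) * (c1q - c1p : ℕ) = (b : ℤ) * (c0q - c0p : ℕ) := by
        push_cast [m1, m0]
        simp only [lvlAt] at hlvl
        linarith
      exact_mod_cast this
    have hdvd : b ∣ (c1q - c1p) := by
      have : b ∣ a * (c1q - c1p) := ⟨c0q - c0p, heq⟩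
      exact (Nat.Coprime.dvd_of_dvd_mul_left (hab.symm) this)
    have hle : c1q - c1p ≤ b := by
      have := count_take_le Q true q
      rw [hQ.1] at this; omega
    have hLab : Q.length = a + b := by
      rw [← count_add_length Q, hQ.1, hQ.2]; omega
    rcases Nat.eq_zero_or_pos (c1q - c1p) with h0 | hpos
    · -- dy = 0 so dx = 0, contradiction with p < q
      rw [h0, Nat.mul_zero] at heq
      have : c0q - c0p = 0 := by
        rcases Nat.mul_eq_zero.mp heq.symm with h | h
        · omega
        · exact h
      omega
    · have : b ≤ c1q - c1p := Nat.le_of_dvd hpos hdvd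
      have hdy : c1q - c1p = b := le_antisymm hle this
      have hdx : c0q - c0p = a := by
        rw [hdy] at heq
        have : b * a = b * (c0q - c0p) := by rw [← heq]; ring
        exact (Nat.eq_of_mul_eq_mul_left hb this).symm
      omega
  rcases le_total m₁ m₂ with hle | hle
  · exact key m₁ m₂ hle h2 h
  · exact (key m₂ m₁ hle h1 h.symm).symm

end USK

/-- every cyclic-shift equivalence class contains exactly one
`k`-skeletal path. -/
theorem unique_skeletal_shift (a b k : ℕ) (ha : 0 < a) (hb : 0 < b)
    (hab : a.Coprime b) (hk : k < b) :
    ∀ P : List Bool, IsPath a b P →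
      ∃! Q : List Bool, (∃ m ≤ P.length, Q = P.rotate m) ∧ SkeletalPath a b k Q := by
  intro P hP
  classical
  have hLab : P.length = a + b := by
    rw [← USK.count_add_length P, hP.1, hP.2]; omega
  have hL0 : 0 < P.length := by omega
  have hrotlen : ∀ m : ℕ, (P.rotate m).length = P.length := fun m => List.length_rotate P m
  have hℓ0 : lvlAt a b P 0 = 0 := USK.lvl_zero a b P
  have hℓL : lvlAt a b P P.length = 0 := USK.lvl_length a b P hP
  -- unified rotation-level formula
  have hrotlvl : ∀ m n : ℕ, m < P.length → n ≤ P.length →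
      lvlAt a b (P.rotate m) n = lvlAt a b P ((m + n) % P.length) - lvlAt a b P m := by
    intro m n hm hn
    rcases Nat.lt_or_ge (m + n) P.length with h' | h'
    · rw [USK.lvl_rotate_le a b P (le_of_lt hm) (le_of_lt h'), Nat.mod_eq_of_lt h']
    · rcases Nat.eq_or_lt_of_le h' with heq | hlt
      · rw [USK.lvl_rotate_le a b P (le_of_lt hm) (le_of_eq heq.symm), ← heq, Nat.mod_self,
          hℓ0, hℓL]
      · rw [USK.lvl_rotate_ge a b P hP (le_of_lt hm) hn h']
        congr 2
        have h2 : m + n - P.length < P.length := by omega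
        rw [Nat.mod_eq_sub_mod h', Nat.mod_eq_of_lt h2]
  have hrotrot : ∀ m n : ℕ, (P.rotate m).rotate n = P.rotate ((m + n) % P.length) := by
    intro m n
    rw [List.rotate_rotate]
    exact (List.rotate_mod P (m + n)).symm
  -- minimum level position
  obtain ⟨m₀, hm₀r, hm₀min⟩ := Finset.exists_min_image (Finset.range P.length)
    (fun m => lvlAt a b P m) ⟨0, Finset.mem_range.mpr hL0⟩
  have hm₀lt : m₀ < P.length := Finset.mem_range.mp hm₀r
  have hm₀min' : ∀ j ≤ P.length, lvlAt a b P m₀ ≤ lvlAt a b P j := by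
    intro j hj
    rcases Nat.eq_or_lt_of_le hj with rfl | hj'
    · rw [hℓL]
      have h0 := hm₀min 0 (Finset.mem_range.mpr hL0)
      rwa [hℓ0] at h0
    · exact hm₀min j (Finset.mem_range.mpr hj')
  have hR1m₀ : R1 a b k (P.rotate m₀) := by
    intro n hn _ _
    have hn' : n < P.length := by rwa [hrotlen m₀] at hn
    rw [hrotlvl m₀ n hm₀lt (le_of_lt hn')]
    have := hm₀min' ((m₀ + n) % P.length) (le_of_lt (Nat.mod_lt _ hL0))
    linarith
  -- the set of R1-rotations, and its max-level element
  set S : Finset ℕ := (Finset.range P.length).filter (fun m => R1 a b k (P.rotate m)) with hS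
  have hm₀S : m₀ ∈ S := Finset.mem_filter.mpr ⟨hm₀r, hR1m₀⟩
  obtain ⟨M, hMS, hMmax⟩ := S.exists_max_image (fun m => lvlAt a b P m) ⟨m₀, hm₀S⟩
  have hMlt : M < P.length := Finset.mem_range.mp (Finset.mem_filter.mp hMS).1
  have hMR1 : R1 a b k (P.rotate M) := (Finset.mem_filter.mp hMS).2
  refine ⟨P.rotate M, ⟨⟨M, le_of_lt hMlt, rfl⟩, hMR1, ?_⟩, ?_⟩
  · -- R2 for P.rotate M
    intro n hn hpos hR1'
    have hn' : n ≤ P.length := by rwa [hrotlen M] at hn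
    rw [hrotlvl M n hMlt hn'] at hpos
    rw [hrotrot M n] at hR1'
    have hmem : (M + n) % P.length ∈ S :=
      Finset.mem_filter.mpr ⟨Finset.mem_range.mpr (Nat.mod_lt _ hL0), hR1'⟩
    have := hMmax _ hmem
    linarith
  · -- uniqueness
    rintro Q ⟨⟨m, hm, rfl⟩, hQR1, hQR2⟩
    have hrm : P.rotate m = P.rotate (m % P.length) := (List.rotate_mod P m).symm
    set m' := m % P.length with hm'def
    have hm'lt : m' < P.length := Nat.mod_lt _ hL0
    rw [hrm] at hQR1 hQR2 ⊢
    have hm'S : m' ∈ S := Finset.mem_filter.mpr ⟨Finset.mem_range.mpr hm'lt, hQR1⟩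
    have h1 : lvlAt a b P m' ≤ lvlAt a b P M := hMmax m' hm'S
    have h2 : ¬ (lvlAt a b P m' < lvlAt a b P M) := by
      intro hlt
      obtain ⟨n, hn_le, hmod⟩ : ∃ n, n ≤ P.length ∧ (m' + n) % P.length = M := by
        rcases le_or_gt m' M with hc | hc
        · exact ⟨M - m', by omega, by
            rw [Nat.add_sub_cancel' hc]; exact Nat.mod_eq_of_lt hMlt⟩
        · refine ⟨M + P.length - m', by omega, ?_⟩
          have he : m' + (M + P.length - m') = M + P.length := by omega
          rw [he, Nat.add_mod_right]
          exact Nat.mod_eq_of_lt hMlt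
      have hpos' : 0 < lvlAt a b (P.rotate m') n := by
        rw [hrotlvl m' n hm'lt hn_le, hmod]; linarith
      have hnR1 := hQR2 n (by rw [hrotlen]; exact hn_le) hpos'
      rw [hrotrot m' n, hmod] at hnR1
      exact hnR1 hMR1
    have heq : lvlAt a b P m' = lvlAt a b P M := le_antisymm h1 (not_lt.mp h2)
    have : m' = M := USK.lvl_inj a b ha hb hab P hP hm'lt hMlt heq
    rw [this]
end

section
/- Let a, b be coprime positive integers and fix k with 0 ≤ k < b. The number of k-skeletal paths in P(N^b E^a) equals the rational Catalan number Cat(a,b) = (a+b)!/(a!·b!·(a+b)). -/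
namespace SkelAux

open List

lemma count_tf (l : List Bool) : l.count true + l.count false = l.length := by
  induction l with
  | nil => rfl
  | cons x t ih => cases x <;> simp [List.count_cons] <;> omega

lemma isPath_length {a b : ℕ} {Q : List Bool} (h : IsPath a b Q) : Q.length = a + b := by
  have := count_tf Q
  obtain ⟨h1, h2⟩ := h
  omega

lemma isPath_rotate {a b : ℕ} {Q : List Bool} (h : IsPath a b Q) (s : ℕ) :
    IsPath a b (Q.rotate s) := by
  obtain ⟨h1, h2⟩ := h
  exact ⟨((Q.rotate_perm s).count_eq true).trans h1,
    ((Q.rotate_perm s).count_eq false).trans h2⟩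

lemma count_take_tf {Q : List Bool} {m : ℕ} (hm : m ≤ Q.length) :
    (Q.take m).count true + (Q.take m).count false = m := by
  have := count_tf (Q.take m)
  rw [List.length_take] at this
  omega

lemma lvl_zero (a b : ℕ) (Q : List Bool) : lvlAt a b Q 0 = 0 := by
  simp [lvlAt]

lemma lvl_full {a b : ℕ} {Q : List Bool} (h : IsPath a b Q) : lvlAt a b Q (a + b) = 0 := by
  rw [lvlAt, List.take_of_length_le (le_of_eq (isPath_length h)), h.1, h.2]
  ring

/-- `lvl m = a·m − (a+b)·(#east steps among the first m)`. -/
lemma lvl_eq {a b : ℕ} {Q : List Bool} (h : IsPath a b Q) {m : ℕ} (hm : m ≤ a + b) :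
    lvlAt a b Q m = (a : ℤ) * m - ((a : ℤ) + b) * ((Q.take m).count false : ℤ) := by
  have h1 : (Q.take m).count true + (Q.take m).count false = m :=
    count_take_tf (by rw [isPath_length h]; exact hm)
  have h2 : ((Q.take m).count true : ℤ) = (m : ℤ) - ((Q.take m).count false : ℤ) := by
    omega
  rw [lvlAt, h2]; ring

lemma lvl_inj {a b : ℕ} (hab : a.Coprime b) {Q : List Bool} (h : IsPath a b Q)
    {m m' : ℕ} (hm : m < a + b) (hm' : m' < a + b)
    (he : lvlAt a b Q m = lvlAt a b Q m') : m = m' := by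
  rw [lvl_eq h hm.le, lvl_eq h hm'.le] at he
  have hd : ((a : ℤ) + b) ∣ ((a : ℤ) * m - (a : ℤ) * m') :=
    ⟨((Q.take m).count false : ℤ) - ((Q.take m').count false : ℤ), by linarith⟩
  have hco : IsCoprime ((a : ℤ) + b) (a : ℤ) := by
    have : Nat.Coprime a (a + b) := by
      rw [Nat.add_comm a b]
      exact (Nat.coprime_add_self_right).2 hab
    have := Nat.isCoprime_iff_coprime.2 this
    push_cast at this ⊢
    exact this.symm
  have hdvd : ((a : ℤ) + b) ∣ ((m : ℤ) - m') := by
    have : (a : ℤ) * m - (a : ℤ) * m' = (a : ℤ) * ((m : ℤ) - m') := by ring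
    rw [this] at hd
    exact hco.dvd_of_dvd_mul_left hd
  have hz : ((m : ℤ) - m') = 0 := by
    refine Int.eq_zero_of_abs_lt_dvd hdvd ?_
    rw [abs_lt]
    constructor <;> push_cast <;> omega
  omega

/-- Rotation-of-level formula, non-wrapping case. -/
lemma lvl_rotate_le {a b : ℕ} {Q : List Bool} (h : IsPath a b Q) {s j : ℕ}
    (hs : s ≤ a + b) (hsj : s + j ≤ a + b) :
    lvlAt a b (Q.rotate s) j = lvlAt a b Q (s + j) - lvlAt a b Q s := by
  have hlen : Q.length = a + b := isPath_length h
  have hrot : Q.rotate s = Q.drop s ++ Q.take s :=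
    List.rotate_eq_drop_append_take (by rw [hlen]; exact hs)
  have hjd : j ≤ (Q.drop s).length := by rw [List.length_drop, hlen]; omega
  have htk : (Q.rotate s).take j = (Q.drop s).take j := by
    rw [hrot, List.take_append]
    have h0 : j - (Q.drop s).length = 0 := by omega
    rw [h0, List.take_zero, List.append_nil]
  have hadd : Q.take (s + j) = Q.take s ++ (Q.drop s).take j := List.take_add
  have hct : (Q.take (s + j)).count true
      = (Q.take s).count true + ((Q.drop s).take j).count true := by
    rw [hadd, List.count_append]
  have hcf : (Q.take (s + j)).count false
      = (Q.take s).count false + ((Q.drop s).take j).count false := by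
    rw [hadd, List.count_append]
  rw [lvlAt, htk, lvlAt, lvlAt, hct, hcf]
  push_cast
  ring

/-- Rotation-of-level formula, wrapping case. -/
lemma lvl_rotate_gt {a b : ℕ} {Q : List Bool} (h : IsPath a b Q) {s j : ℕ}
    (hs : s ≤ a + b) (hj : j ≤ a + b) (hsj : a + b < s + j) :
    lvlAt a b (Q.rotate s) j = lvlAt a b Q (s + j - (a + b)) - lvlAt a b Q s := by
  have hlen : Q.length = a + b := isPath_length h
  have hrot : Q.rotate s = Q.drop s ++ Q.take s :=
    List.rotate_eq_drop_append_take (by rw [hlen]; exact hs)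
  have hld : (Q.drop s).length = a + b - s := by rw [List.length_drop, hlen]
  have hjd : (Q.drop s).length ≤ j := by omega
  have htk : (Q.rotate s).take j = Q.drop s ++ Q.take (s + j - (a + b)) := by
    rw [hrot, List.take_append, List.take_of_length_le hjd,
      List.take_take]
    congr 1
    · congr 1
      omega
  have hsplit : ∀ x : Bool, (Q.take s).count x + (Q.drop s).count x = Q.count x := by
    intro x
    conv_rhs => rw [← List.take_append_drop s Q]
    rw [List.count_append]
  have e1 := hsplit true
  have e2 := hsplit false
  rw [h.1] at e1
  rw [h.2] at e2
  have e1' : ((Q.drop s).count true : ℤ) = (b : ℤ) - ((Q.take s).count true : ℤ) := by omega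
  have e2' : ((Q.drop s).count false : ℤ) = (a : ℤ) - ((Q.take s).count false : ℤ) := by omega
  rw [lvlAt, htk, List.count_append, List.count_append, lvlAt, lvlAt]
  push_cast [e1', e2']
  ring

/-- Combined rotation formula via `%`. -/
lemma lvl_rotate_mod {a b : ℕ} (hn : 0 < a + b) {Q : List Bool} (h : IsPath a b Q)
    {s m : ℕ} (hs : s < a + b) (hm : m ≤ a + b) :
    lvlAt a b (Q.rotate s) m = lvlAt a b Q ((s + m) % (a + b)) - lvlAt a b Q s := by
  rcases lt_trichotomy (s + m) (a + b) with hc | hc | hc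
  · rw [Nat.mod_eq_of_lt hc]
    exact lvl_rotate_le h hs.le hc.le
  · rw [hc, Nat.mod_self, lvl_zero, lvl_rotate_le h hs.le hc.le, hc, lvl_full h]
  · have h1 : (s + m) % (a + b) = s + m - (a + b) := by
      have : s + m - (a + b) < a + b := by omega
      rw [Nat.mod_eq_sub_mod (by omega), Nat.mod_eq_of_lt this]
    rw [h1]
    exact lvl_rotate_gt h hs.le hm hc

lemma rotate_rotate_mod {a b : ℕ} {Q : List Bool} (h : IsPath a b Q) (s m : ℕ) :
    (Q.rotate s).rotate m = Q.rotate ((s + m) % (a + b)) := by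
  rw [List.rotate_rotate, ← List.rotate_mod, isPath_length h]

/-- Existence of a rotation satisfying R1 (the Dyck rotation). -/
lemma exists_R1 {a b k : ℕ} (hn : 0 < a + b) {Q : List Bool} (h : IsPath a b Q) :
    ∃ s < a + b, R1 a b k (Q.rotate s) := by
  obtain ⟨s, hs, hmin⟩ := Finset.exists_min_image (Finset.range (a + b)) (lvlAt a b Q)
    ⟨0, Finset.mem_range.2 hn⟩
  rw [Finset.mem_range] at hs
  refine ⟨s, hs, ?_⟩
  intro m hm _ _
  have hm' : m ≤ a + b := by
    rw [List.length_rotate, isPath_length h] at hm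
    omega
  rw [lvl_rotate_mod hn h hs hm']
  have hmem : (s + m) % (a + b) < a + b := Nat.mod_lt _ hn
  have := hmin _ (Finset.mem_range.2 hmem)
  omega

/-- Characterization of skeletal rotations: `Q.rotate s` is skeletal iff `s`
satisfies R1 and maximizes the level among R1 rotation points. -/
lemma skeletal_iff {a b k : ℕ} (hn : 0 < a + b) {Q : List Bool} (h : IsPath a b Q)
    {s : ℕ} (hs : s < a + b) :
    SkeletalPath a b k (Q.rotate s) ↔
      (R1 a b k (Q.rotate s) ∧
        ∀ p < a + b, R1 a b k (Q.rotate p) → lvlAt a b Q p ≤ lvlAt a b Q s) := by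
  have hlen : (Q.rotate s).length = a + b := by rw [List.length_rotate, isPath_length h]
  constructor
  · rintro ⟨h1, h2⟩
    refine ⟨h1, ?_⟩
    intro p hp hR1p
    by_contra hlt
    push_neg at hlt
    set m : ℕ := if s ≤ p then p - s else (a + b) + p - s with hm
    have hmle : m ≤ a + b := by rw [hm]; split <;> omega
    have hmod : (s + m) % (a + b) = p := by
      rw [hm]; split
      · rw [Nat.mod_eq_of_lt (by omega)]; omega
      · have : s + ((a + b) + p - s) = (a + b) + p := by omega
        rw [this, Nat.add_comm, Nat.add_mod_right, Nat.mod_eq_of_lt hp]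
    have hpos : 0 < lvlAt a b (Q.rotate s) m := by
      rw [lvl_rotate_mod hn h hs hmle, hmod]; omega
    have := h2 m (by omega) hpos
    rw [rotate_rotate_mod h, hmod] at this
    exact this hR1p
  · rintro ⟨h1, h2⟩
    refine ⟨h1, ?_⟩
    intro m hm hpos
    rw [hlen] at hm
    rw [lvl_rotate_mod hn h hs hm] at hpos
    rw [rotate_rotate_mod h]
    intro hR1p
    have hmem : (s + m) % (a + b) < a + b := Nat.mod_lt _ hn
    have := h2 _ hmem hR1p
    omega

lemma finite_words (n c : ℕ) : {Q : List Bool | Q.length = n ∧ Q.count true = c}.Finite :=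
  (List.finite_length_eq Bool n).subset fun _ hQ => hQ.1

lemma cons_inj (x : Bool) : Function.Injective (List.cons x) := fun _ _ h => by
  injection h

lemma card_words : ∀ n c : ℕ, {Q : List Bool | Q.length = n ∧ Q.count true = c}.ncard
    = n.choose c := by
  intro n
  induction n with
  | zero =>
    intro c
    cases c with
    | zero =>
      have he : {Q : List Bool | Q.length = 0 ∧ Q.count true = 0} = {([] : List Bool)} := by
        ext Q
        simp only [Set.mem_setOf_eq, Set.mem_singleton_iff, List.length_eq_zero_iff]
        constructor
        · rintro ⟨h1, _⟩; exact h1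
        · rintro rfl; simp
      rw [he, Set.ncard_singleton, Nat.choose_self]
    | succ c =>
      have he : {Q : List Bool | Q.length = 0 ∧ Q.count true = c + 1} = ∅ := by
        ext Q
        simp only [Set.mem_setOf_eq, Set.mem_empty_iff_false, iff_false, not_and,
          List.length_eq_zero_iff]
        rintro rfl
        simp
      rw [he, Set.ncard_empty]
      simp
  | succ n ih =>
    intro c
    cases c with
    | zero =>
      have he : {Q : List Bool | Q.length = n + 1 ∧ Q.count true = 0}
          = (List.cons false) '' {Q : List Bool | Q.length = n ∧ Q.count true = 0} := by
        ext Q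
        constructor
        · rintro ⟨hl, hc⟩
          cases Q with
          | nil => simp at hl
          | cons x T =>
            cases x
            · refine ⟨T, ⟨by simpa using hl, by simpa [List.count_cons] using hc⟩, rfl⟩
            · simp [List.count_cons] at hc
        · rintro ⟨T, ⟨h1, h2⟩, rfl⟩
          exact ⟨by simp [h1], by simp [List.count_cons, h2]⟩
      rw [he, Set.ncard_image_of_injective _ (cons_inj false), ih 0]
      simp
    | succ c =>
      have he : {Q : List Bool | Q.length = n + 1 ∧ Q.count true = c + 1}
          = (List.cons true) '' {Q : List Bool | Q.length = n ∧ Q.count true = c}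
            ∪ (List.cons false) '' {Q : List Bool | Q.length = n ∧ Q.count true = c + 1} := by
        ext Q
        constructor
        · rintro ⟨hl, hc⟩
          cases Q with
          | nil => simp at hl
          | cons x T =>
            cases x
            · exact Or.inr ⟨T, ⟨by simpa using hl, by simpa [List.count_cons] using hc⟩, rfl⟩
            · exact Or.inl ⟨T, ⟨by simpa using hl, by
                have : T.count true + 1 = c + 1 := by simpa [List.count_cons] using hc
                omega⟩, rfl⟩
        · rintro (⟨T, ⟨h1, h2⟩, rfl⟩ | ⟨T, ⟨h1, h2⟩, rfl⟩) <;>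
            exact ⟨by simp [h1], by simp [List.count_cons, h2]⟩
      have hdisj : Disjoint ((List.cons true) '' {Q : List Bool | Q.length = n ∧ Q.count true = c})
          ((List.cons false) '' {Q : List Bool | Q.length = n ∧ Q.count true = c + 1}) := by
        rw [Set.disjoint_left]
        rintro Q ⟨T, _, rfl⟩ ⟨T', _, h⟩
        injection h with h1 _
        exact Bool.noConfusion h1
      rw [he, Set.ncard_union_eq hdisj ((finite_words n c).image _)
          ((finite_words n (c + 1)).image _),
        Set.ncard_image_of_injective _ (cons_inj true),
        Set.ncard_image_of_injective _ (cons_inj false), ih c, ih (c + 1)]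
      rw [Nat.choose_succ_succ]

lemma inv_rot {Q : List Bool} {n m : ℕ} (hlen : Q.length = n) (hm : m < n) :
    (Q.rotate m).rotate ((n - m) % n) = Q := by
  have hn : 0 < n := by omega
  have h0 : (m + (n - m) % n) % n = 0 := by
    rcases Nat.eq_zero_or_pos m with rfl | hm0
    · simp
    · rw [Nat.mod_eq_of_lt (by omega : n - m < n)]
      have h1 : m + (n - m) = n := by omega
      rw [h1, Nat.mod_self]
  calc (Q.rotate m).rotate ((n - m) % n) = Q.rotate (m + (n - m) % n) :=
        List.rotate_rotate Q m _
    _ = Q.rotate ((m + (n - m) % n) % Q.length) := (List.rotate_mod _ _).symm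
    _ = Q.rotate 0 := by rw [hlen, h0]
    _ = Q := Q.rotate_zero

end SkelAux

theorem skeletal_count (a b k : ℕ) (ha : 0 < a) (hb : 0 < b)
    (hab : a.Coprime b) (hk : k < b) :
    {Q : List Bool | IsPath a b Q ∧ SkeletalPath a b k Q}.ncard =
      (a + b).factorial / (a.factorial * b.factorial * (a + b)) := by
  classical
  open SkelAux in
  have hn : 0 < a + b := by omega
  set S := {Q : List Bool | IsPath a b Q ∧ SkeletalPath a b k Q} with hS
  set P := {Q : List Bool | IsPath a b Q} with hPdef
  -- the set of all paths has cardinality (a+b).choose b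
  have hPeq : P = {Q : List Bool | Q.length = a + b ∧ Q.count true = b} := by
    ext Q
    constructor
    · intro h
      exact ⟨SkelAux.isPath_length h, h.1⟩
    · rintro ⟨h1, h2⟩
      refine ⟨h2, ?_⟩
      have := SkelAux.count_tf Q
      omega
  have hPcard : P.ncard = (a + b).choose b := by rw [hPeq, SkelAux.card_words]
  -- the rotation bijection
  let Φ : (↥S × Fin (a + b)) → ↥P :=
    fun x => ⟨x.1.1.rotate x.2.1, SkelAux.isPath_rotate x.1.2.1 x.2.1⟩
  have hbij : Function.Bijective Φ := by
    constructor
    · rintro ⟨⟨Q, hQpath, hQskel⟩, m⟩ ⟨⟨Q', hQ'path, hQ'skel⟩, m'⟩ hEq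
      have hval : Q.rotate m.1 = Q'.rotate m'.1 := congrArg Subtype.val hEq
      set W := Q.rotate m.1 with hW
      have hWpath : IsPath a b W := SkelAux.isPath_rotate hQpath m.1
      set s := (a + b - m.1) % (a + b) with hs
      set s' := (a + b - m'.1) % (a + b) with hs'
      have hslt : s < a + b := Nat.mod_lt _ hn
      have hs'lt : s' < a + b := Nat.mod_lt _ hn
      have hQrec : W.rotate s = Q := SkelAux.inv_rot (SkelAux.isPath_length hQpath) m.2
      have hQ'rec : W.rotate s' = Q' := by
        rw [hval]
        exact SkelAux.inv_rot (SkelAux.isPath_length hQ'path) m'.2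
      have hsk : SkeletalPath a b k (W.rotate s) := by rw [hQrec]; exact hQskel
      have hsk' : SkeletalPath a b k (W.rotate s') := by rw [hQ'rec]; exact hQ'skel
      rw [SkelAux.skeletal_iff hn hWpath hslt] at hsk
      rw [SkelAux.skeletal_iff hn hWpath hs'lt] at hsk'
      have hle : lvlAt a b W s' ≤ lvlAt a b W s := hsk.2 s' hs'lt hsk'.1
      have hge : lvlAt a b W s ≤ lvlAt a b W s' := hsk'.2 s hslt hsk.1
      have hss' : s = s' := SkelAux.lvl_inj hab hWpath hslt hs'lt (le_antisymm hge hle)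
      have hmm' : m.1 = m'.1 := by
        have h2 : m.1 < a + b := m.2
        have h2' : m'.1 < a + b := m'.2
        rcases Nat.eq_zero_or_pos m.1 with h0 | h0 <;>
          rcases Nat.eq_zero_or_pos m'.1 with h0' | h0'
        · omega
        · exfalso
          rw [hs, hs', h0, Nat.sub_zero, Nat.mod_self,
            Nat.mod_eq_of_lt (by omega : a + b - m'.1 < a + b)] at hss'
          omega
        · exfalso
          rw [hs, hs', h0', Nat.sub_zero, Nat.mod_self,
            Nat.mod_eq_of_lt (by omega : a + b - m.1 < a + b)] at hss'
          omega
        · rw [hs, hs', Nat.mod_eq_of_lt (by omega : a + b - m.1 < a + b),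
            Nat.mod_eq_of_lt (by omega : a + b - m'.1 < a + b)] at hss'
          omega
      have hQQ' : Q = Q' := by rw [← hQrec, ← hQ'rec, hss']
      subst hQQ'
      simp only [Prod.mk.injEq, Subtype.mk.injEq]
      exact ⟨trivial, Fin.ext hmm'⟩
    · rintro ⟨W, hW⟩
      -- find the skeletal rotation of W
      obtain ⟨s0, hs0, hR10⟩ := SkelAux.exists_R1 (k := k) hn hW
      set A : Finset ℕ := (Finset.range (a + b)).filter
        (fun p => R1 a b k (W.rotate p)) with hA
      have hAne : A.Nonempty := ⟨s0, Finset.mem_filter.2 ⟨Finset.mem_range.2 hs0, hR10⟩⟩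
      obtain ⟨s, hsA, hsmax⟩ := Finset.exists_max_image A (lvlAt a b W) hAne
      obtain ⟨hsr, hsR1⟩ := Finset.mem_filter.1 hsA
      rw [Finset.mem_range] at hsr
      have hskel : SkeletalPath a b k (W.rotate s) :=
        (SkelAux.skeletal_iff hn hW hsr).2
          ⟨hsR1, fun p hp hR1p =>
            hsmax p (Finset.mem_filter.2 ⟨Finset.mem_range.2 hp, hR1p⟩)⟩
      refine ⟨⟨⟨W.rotate s, SkelAux.isPath_rotate hW s, hskel⟩,
        ⟨(a + b - s) % (a + b), Nat.mod_lt _ hn⟩⟩, ?_⟩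
      apply Subtype.ext
      exact SkelAux.inv_rot (SkelAux.isPath_length hW) hsr
  have hcard : Nat.card (↥S × Fin (a + b)) = Nat.card ↥P := Nat.card_eq_of_bijective Φ hbij
  have hfin : Nat.card (Fin (a + b)) = a + b :=
    Nat.card_eq_fintype_card.trans (Fintype.card_fin _)
  rw [Nat.card_prod, hfin, Nat.card_coe_set_eq, Nat.card_coe_set_eq, hPcard] at hcard
  -- final arithmetic
  have hcb : (a + b).choose b * b.factorial * a.factorial = (a + b).factorial := by
    have h := Nat.choose_mul_factorial_mul_factorial (Nat.le_add_left b a)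
    simpa using h
  have hpos : 0 < a.factorial * b.factorial * (a + b) :=
    Nat.mul_pos (Nat.mul_pos a.factorial_pos b.factorial_pos) hn
  have key : (a + b).factorial = S.ncard * (a.factorial * b.factorial * (a + b)) := by
    calc (a + b).factorial = (a + b).choose b * b.factorial * a.factorial := hcb.symm
      _ = (S.ncard * (a + b)) * b.factorial * a.factorial := by rw [hcard]
      _ = S.ncard * (a.factorial * b.factorial * (a + b)) := by ring
  exact (Nat.div_eq_of_eq_mul_left hpos key).symm
end

section
/- Let a, b be coprime positive integers and fix k with 0 ≤ k < b. For every labeled path Q from (0,0) to (a,b) that ends in an east step, there is exactly one k-skeletal labeled path Q' that is a run-preserving cyclic shift of Q. -/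
/-- A labeled path: `none` = east step, `some i` = north step labeled `i`.
It has `a` east steps, each label `1,…,b` exactly once, and labels increase
along each run of consecutive north steps. -/
def IsLabeled (a b : ℕ) (L : List (Option (Fin b))) : Prop :=
  L.count none = a ∧ (∀ i : Fin b, L.count (some i) = 1) ∧
  ∀ m : ℕ, ∀ i j : Fin b, L.getD m none = some i → L.getD (m + 1) none = some j → i < j

/-- The underlying unlabeled path of a labeled path. -/
def unlabel {b : ℕ} (L : List (Option (Fin b))) : List Bool :=
  L.map Option.isSome

/- ### Auxiliary lemmas -/

lemma counts_length (Q : List Bool) : Q.count true + Q.count false = Q.length := by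
  induction Q with
  | nil => rfl
  | cons x xs ih => cases x <;> simp [List.count_cons] <;> omega

lemma lvlAt_zero (a b : ℕ) (Q : List Bool) : lvlAt a b Q 0 = 0 := by
  simp [lvlAt]

/-- Levels of the rotated path in terms of levels of the original path. -/
lemma lvlAt_rotate (a b : ℕ) (Q : List Bool) (hT : Q.count true = b)
    (hF : Q.count false = a) {m t : ℕ} (hm : m < Q.length) (ht : t ≤ Q.length) :
    lvlAt a b (Q.rotate m) t = lvlAt a b Q ((m + t) % Q.length) - lvlAt a b Q m := by
  have hmn : m ≤ Q.length := hm.le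
  have hdl : (Q.drop m).length = Q.length - m := List.length_drop
  rw [List.rotate_eq_drop_append_take hmn]
  by_cases h : m + t ≤ Q.length
  · have h1 : t - (Q.drop m).length = 0 := by omega
    have htake : (Q.drop m ++ Q.take m).take t = (Q.drop m).take t := by
      rw [List.take_append, h1, List.take_zero, List.append_nil]
    have hc : ∀ c : Bool, (Q.take (m + t)).count c
        = (Q.take m).count c + ((Q.drop m).take t).count c := by
      intro c; rw [List.take_add, List.count_append]
    have e1 := hc true
    have e0 := hc false
    rcases lt_or_eq_of_le h with h' | h'
    · have hmod : (m + t) % Q.length = m + t := Nat.mod_eq_of_lt h'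
      unfold lvlAt
      rw [htake, hmod]
      have e1' : ((((Q.drop m).take t).count true : ℕ) : ℤ)
          = ((Q.take (m + t)).count true : ℤ) - ((Q.take m).count true : ℤ) := by omega
      have e0' : ((((Q.drop m).take t).count false : ℕ) : ℤ)
          = ((Q.take (m + t)).count false : ℤ) - ((Q.take m).count false : ℤ) := by omega
      rw [e1', e0']; ring
    · have hmod : (m + t) % Q.length = 0 := by rw [h']; exact Nat.mod_self _
      rw [h', List.take_length] at e1 e0
      rw [hT] at e1; rw [hF] at e0
      unfold lvlAt
      rw [htake, hmod]
      have e1' : ((((Q.drop m).take t).count true : ℕ) : ℤ)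
          = (b : ℤ) - ((Q.take m).count true : ℤ) := by omega
      have e0' : ((((Q.drop m).take t).count false : ℕ) : ℤ)
          = (a : ℤ) - ((Q.take m).count false : ℤ) := by omega
      rw [e1', e0']
      simp only [List.take_zero]
      simp only [List.count_nil]
      push_cast
      ring
  · have hlt : Q.length < m + t := by omega
    set s := m + t - Q.length with hs
    have hsm : s ≤ m := by omega
    have hsn : s < Q.length := by omega
    have htake : (Q.drop m ++ Q.take m).take t = Q.drop m ++ Q.take s := by
      rw [List.take_append,
        List.take_of_length_le (by omega : (Q.drop m).length ≤ t), List.take_take, hdl,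
        show t - (Q.length - m) = s by omega, min_eq_left hsm]
    have hmod : (m + t) % Q.length = s := by
      rw [show m + t = Q.length + s by omega, Nat.add_mod_left]
      exact Nat.mod_eq_of_lt hsn
    have hc : ∀ c : Bool, (Q.drop m).count c + (Q.take m).count c = Q.count c := by
      intro c
      conv_rhs => rw [← List.take_append_drop m Q]
      rw [List.count_append]; omega
    have e1 := hc true
    have e0 := hc false
    rw [hT] at e1; rw [hF] at e0
    unfold lvlAt
    rw [htake, hmod, List.count_append, List.count_append]
    have e1' : (((Q.drop m).count true : ℕ) : ℤ) + ((Q.take s).count true : ℤ)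
        = (b : ℤ) - ((Q.take m).count true : ℤ) + ((Q.take s).count true : ℤ) := by omega
    have e0' : (((Q.drop m).count false : ℕ) : ℤ) + ((Q.take s).count false : ℤ)
        = (a : ℤ) - ((Q.take m).count false : ℤ) + ((Q.take s).count false : ℤ) := by omega
    push_cast
    push_cast at e1' e0'
    rw [e1', e0']
    ring

/-- Alternative formula for the level. -/
lemma lvlAt_eq_alt (a b : ℕ) (Q : List Bool) {m : ℕ} (hm : m ≤ Q.length) :
    lvlAt a b Q m = ((a : ℤ) + b) * ((Q.take m).count true : ℤ) - (b : ℤ) * m := by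
  have h1 : (Q.take m).count true + (Q.take m).count false = (Q.take m).length :=
    counts_length _
  have h2 : (Q.take m).length = m := by rw [List.length_take]; omega
  unfold lvlAt
  have h3 : (((Q.take m).count false : ℕ) : ℤ) = (m : ℤ) - ((Q.take m).count true : ℤ) := by
    omega
  rw [h3]; ring

/-- Since `a` and `b` are coprime, levels along the path are pairwise distinct. -/
lemma lvlAt_injOn (a b : ℕ) (hab : a.Coprime b) (Q : List Bool)
    (hT : Q.count true = b) (hF : Q.count false = a)
    {m₁ m₂ : ℕ} (h1 : m₁ < Q.length) (h2 : m₂ < Q.length)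
    (h : lvlAt a b Q m₁ = lvlAt a b Q m₂) : m₁ = m₂ := by
  have hlen : Q.length = a + b := by have := counts_length Q; omega
  have hco : (a + b).Coprime b := Nat.coprime_add_self_left.mpr hab
  have key : ∀ p q : ℕ, p ≤ q → q < Q.length →
      lvlAt a b Q p = lvlAt a b Q q → q - p = 0 := by
    intro p q hle hlt heq
    rw [lvlAt_eq_alt a b Q (le_of_lt (lt_of_le_of_lt hle hlt)),
      lvlAt_eq_alt a b Q hlt.le] at heq
    have hdvd : ((a + b : ℕ) : ℤ) ∣ ((b * (q - p) : ℕ) : ℤ) := by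
      refine ⟨((Q.take q).count true : ℤ) - ((Q.take p).count true : ℤ), ?_⟩
      push_cast [Nat.cast_sub hle]
      linarith
    have hdvd' : (a + b) ∣ b * (q - p) := Int.natCast_dvd_natCast.mp hdvd
    have hdvd2 : (a + b) ∣ (q - p) := hco.dvd_of_dvd_mul_left hdvd'
    rcases Nat.eq_zero_or_pos (q - p) with h0 | hpos
    · exact h0
    · exact absurd (Nat.le_of_dvd hpos hdvd2) (by omega)
  rcases le_total m₁ m₂ with hle | hle
  · have := key m₁ m₂ hle h2 h; omega
  · have := key m₂ m₁ hle h1 h.symm; omega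

/-- Core unlabeled statement: there is a unique (mod `Q.length`) rotation of `Q`
that is `k`-skeletal. -/
lemma core (a b k : ℕ) (hb : 0 < b) (hab : a.Coprime b)
    (Q : List Bool) (hT : Q.count true = b) (hF : Q.count false = a) :
    ∃ m₀ < Q.length, SkeletalPath a b k (Q.rotate m₀) ∧
      ∀ m, SkeletalPath a b k (Q.rotate m) → m % Q.length = m₀ := by
  classical
  have hlen : Q.length = a + b := by have := counts_length Q; omega
  have hn0 : 0 < Q.length := by omega
  have key : ∀ m < Q.length, (SkeletalPath a b k (Q.rotate m) ↔
      (R1 a b k (Q.rotate m) ∧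
        ∀ j < Q.length, lvlAt a b Q m < lvlAt a b Q j → ¬ R1 a b k (Q.rotate j))) := by
    intro m hm
    constructor
    · rintro ⟨h1, h2⟩
      refine ⟨h1, fun j hj hlt => ?_⟩
      obtain ⟨t, ht, hmt⟩ : ∃ t ≤ Q.length, (m + t) % Q.length = j := by
        rcases le_or_gt m j with hmj | hmj
        · exact ⟨j - m, by omega,
            by rw [show m + (j - m) = j by omega]; exact Nat.mod_eq_of_lt hj⟩
        · refine ⟨Q.length + j - m, by omega, ?_⟩
          rw [show m + (Q.length + j - m) = Q.length + j by omega, Nat.add_mod_left]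
          exact Nat.mod_eq_of_lt hj
      have hpos : 0 < lvlAt a b (Q.rotate m) t := by
        rw [lvlAt_rotate a b Q hT hF hm ht, hmt]; omega
      have hfail := h2 t (by rw [List.length_rotate]; exact ht) hpos
      rw [List.rotate_rotate, ← List.rotate_mod, hmt] at hfail
      exact hfail
    · rintro ⟨h1, h2⟩
      refine ⟨h1, fun t ht hpos => ?_⟩
      rw [List.length_rotate] at ht
      rw [lvlAt_rotate a b Q hT hF hm ht] at hpos
      have hj : (m + t) % Q.length < Q.length := Nat.mod_lt _ hn0
      have hfail := h2 ((m + t) % Q.length) hj (by omega)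
      rw [List.rotate_rotate, ← List.rotate_mod]
      exact hfail
  set S : Finset ℕ := (Finset.range Q.length).filter (fun m => R1 a b k (Q.rotate m)) with hS
  have hSne : S.Nonempty := by
    obtain ⟨mmin, hmm, hmin⟩ := Finset.exists_min_image (Finset.range Q.length)
      (fun m => lvlAt a b Q m) ⟨0, Finset.mem_range.mpr hn0⟩
    have hmm' : mmin < Q.length := Finset.mem_range.mp hmm
    refine ⟨mmin, Finset.mem_filter.mpr ⟨hmm, ?_⟩⟩
    intro t ht htrue hcnt
    rw [List.length_rotate] at ht
    rw [lvlAt_rotate a b Q hT hF hmm' ht.le]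
    have hmem : (mmin + t) % Q.length ∈ Finset.range Q.length := Finset.mem_range.mpr (Nat.mod_lt _ hn0)
    have := hmin _ hmem
    omega
  obtain ⟨m₀, hm₀S, hmax⟩ := Finset.exists_max_image S (fun m => lvlAt a b Q m) hSne
  obtain ⟨hm₀n, hm₀R⟩ := Finset.mem_filter.mp hm₀S
  have hm₀n' : m₀ < Q.length := Finset.mem_range.mp hm₀n
  have hskel : SkeletalPath a b k (Q.rotate m₀) := by
    rw [key m₀ hm₀n']
    refine ⟨hm₀R, fun j hj hlt hR => ?_⟩
    have hjS : j ∈ S := Finset.mem_filter.mpr ⟨Finset.mem_range.mpr hj, hR⟩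
    have := hmax j hjS
    omega
  refine ⟨m₀, hm₀n', hskel, fun m hm => ?_⟩
  rw [← List.rotate_mod] at hm
  have hm'n : m % Q.length < Q.length := Nat.mod_lt _ hn0
  rw [key _ hm'n] at hm
  obtain ⟨hF1, hF2⟩ := hm
  have hm'S : m % Q.length ∈ S := Finset.mem_filter.mpr ⟨Finset.mem_range.mpr hm'n, hF1⟩
  have hle : lvlAt a b Q (m % Q.length) ≤ lvlAt a b Q m₀ := hmax _ hm'S
  rcases lt_or_eq_of_le hle with hlt | heq
  · exact absurd hm₀R (hF2 m₀ hm₀n' hlt)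
  · exact lvlAt_injOn a b hab Q hT hF hm'n hm₀n' heq

lemma count_rotate {α : Type*} [BEq α] (l : List α) (x : α) (m : ℕ) :
    (l.rotate m).count x = l.count x := by
  rcases Nat.eq_zero_or_pos l.length with h0 | hpos
  · rw [List.length_eq_zero_iff.mp h0]; simp
  · rw [← List.rotate_mod, List.rotate_eq_drop_append_take (Nat.mod_lt _ hpos).le,
      List.count_append]
    conv_rhs => rw [← List.take_append_drop (m % l.length) l, List.count_append]
    omega

lemma countP_isSome_eq {b : ℕ} (L : List (Option (Fin b))) :
    L.countP (fun x => x.isSome) = ∑ i : Fin b, L.count (some i) := by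
  induction L with
  | nil => simp
  | cons x xs ih =>
    cases x with
    | none => simpa [List.countP_cons, List.count_cons] using ih
    | some v =>
      simp [List.countP_cons, List.count_cons, ih, Finset.sum_add_distrib]

lemma unlabel_counts {a b : ℕ} {L : List (Option (Fin b))} (hL : IsLabeled a b L) :
    (unlabel L).count true = b ∧ (unlabel L).count false = a := by
  have h1 : (unlabel L).count true = L.countP (fun x => x.isSome) := by
    rw [unlabel, List.count_eq_countP, List.countP_map]
    refine List.countP_congr fun x _ => ?_
    cases x <;> simp
  have h2 : (unlabel L).count false = L.count none := by
    rw [unlabel, List.count_eq_countP, List.countP_map, List.count_eq_countP]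
    refine List.countP_congr fun x _ => ?_
    cases x <;> simp
  refine ⟨?_, by rw [h2]; exact hL.1⟩
  rw [h1, countP_isSome_eq]
  simp [hL.2.1]

lemma getD_rotate {α : Type*} (l : List α) (d : α) (m : ℕ) {t : ℕ} (ht : t < l.length) :
    (l.rotate m).getD t d = l.getD ((t + m) % l.length) d := by
  have h1 : t < (l.rotate m).length := by rwa [List.length_rotate]
  have h2 : (t + m) % l.length < l.length := Nat.mod_lt _ (by omega)
  rw [List.getD_eq_getElem l d h2, List.getD_eq_getElem _ d h1]
  have := List.get_rotate l m ⟨t, h1⟩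
  simpa [List.get_eq_getElem] using this

lemma isLabeled_rotate {a b : ℕ} {L : List (Option (Fin b))} (hL : IsLabeled a b L)
    (hlast : L.getLast? = some none) (m : ℕ) : IsLabeled a b (L.rotate m) := by
  obtain ⟨hnone, hcount, hadj⟩ := hL
  refine ⟨by rw [count_rotate]; exact hnone,
    fun i => by rw [count_rotate]; exact hcount i, ?_⟩
  intro t i j h1 h2
  have hn0 : 0 < L.length := by
    rcases L with _ | ⟨y, ys⟩
    · simp at hlast
    · simp
  have ht1 : t + 1 < L.length := by
    by_contra hcon
    rw [List.getD_eq_default _ _ (by rw [List.length_rotate]; omega)] at h2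
    exact absurd h2 (by simp)
  have ht : t < L.length := by omega
  rw [getD_rotate L none m ht] at h1
  rw [getD_rotate L none m ht1] at h2
  set p := (t + m) % L.length with hp
  have hpn : p < L.length := Nat.mod_lt _ hn0
  have hlastnone : L.getD (L.length - 1) none = none := by
    rw [List.getD_eq_getElem?_getD]
    rw [List.getLast?_eq_getElem?] at hlast
    rw [hlast]
    rfl
  by_cases hpe : p + 1 < L.length
  · have hd := Nat.div_add_mod (t + m) L.length
    have hq : (t + 1 + m) % L.length = p + 1 := by
      rw [show t + 1 + m = L.length * ((t + m) / L.length) + (p + 1) by omega,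
        Nat.mul_add_mod, Nat.mod_eq_of_lt hpe]
    rw [hq] at h2
    exact hadj p i j h1 h2
  · have hpeq : p = L.length - 1 := by omega
    rw [hpeq, hlastnone] at h1
    exact absurd h1 (by simp)

lemma unlabel_rotate {b : ℕ} (L : List (Option (Fin b))) (m : ℕ) :
    unlabel (L.rotate m) = (unlabel L).rotate m :=
  List.map_rotate _ _ _

/-- every labeled path from `(0,0)` to `(a,b)` ending in an east
step has exactly one `k`-skeletal (run-preserving) cyclic shift. -/
theorem unique_skeletal_labeled_shift (a b k : ℕ) (ha : 0 < a) (hb : 0 < b)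
    (hab : a.Coprime b) (hk : k < b) (L : List (Option (Fin b)))
    (hL : IsLabeled a b L) (hlast : L.getLast? = some none) :
    ∃! L' : List (Option (Fin b)),
      (∃ m ≤ L.length, L' = L.rotate m) ∧ IsLabeled a b L' ∧
        SkeletalPath a b k (unlabel L') := by
  obtain ⟨hQT, hQF⟩ := unlabel_counts hL
  have hlenQ : (unlabel L).length = L.length := List.length_map _
  obtain ⟨m₀, hm₀, hskel, huniq⟩ := core a b k hb hab (unlabel L) hQT hQF
  refine ⟨L.rotate m₀, ⟨⟨m₀, by omega, rfl⟩, isLabeled_rotate hL hlast m₀, ?_⟩, ?_⟩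
  · rw [unlabel_rotate]; exact hskel
  · rintro L' ⟨⟨m, hm, rfl⟩, hlab, hskel'⟩
    rw [unlabel_rotate] at hskel'
    have hmod := huniq m hskel'
    calc L.rotate m = L.rotate (m % L.length) := (List.rotate_mod L m).symm
    _ = L.rotate m₀ := by rw [show m % L.length = m₀ from by rw [← hlenQ]; exact hmod]
end

section
/- Let a, b be coprime positive integers, fix k with 0 ≤ k < b, and let D be a chip configuration with D ≥ 0. Then D is k-stable if and only if for every s with 1 ≤ s ≤ min(k+1, b), the s-th largest value among D(1),…,D(b) is at most ⌊(b−s)·a/b⌋. Equivalently, D is k-stable if and only if the last k+1 north steps of lpath(D) start on or above the line b·x = a·y. -/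
/-- The cluster-fire move `φ_S` for the quantized rational model on the
complete graph (`c = 1`): each `i ∈ S` loses `1 + ⌊(b−s)·a/b⌋` chips and each
`j ∉ S` gains `⌊s·a/b⌋` chips, where `s = |S|`. -/
def cfire (a b : ℕ) (S : Finset (Fin b)) (D : Fin b → ℤ) : Fin b → ℤ :=
  fun i =>
    if i ∈ S then D i - 1 - (((b - S.card) * a / b : ℕ) : ℤ)
    else D i + ((S.card * a / b : ℕ) : ℤ)

/-- The borrow move `β_S = φ_S⁻¹`. -/
def cborrow (a b : ℕ) (S : Finset (Fin b)) (D : Fin b → ℤ) : Fin b → ℤ :=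
  fun i =>
    if i ∈ S then D i + 1 + (((b - S.card) * a / b : ℕ) : ℤ)
    else D i - ((S.card * a / b : ℕ) : ℤ)

/-- `D` is `k`-stable: `D ≥ 0` and no `k`-firing move `φ_S` (with
`0 < |S| ≤ k+1`) is legal on `D`. -/
def KStable (a b k : ℕ) (D : Fin b → ℤ) : Prop :=
  (∀ i, 0 ≤ D i) ∧ ∀ S : Finset (Fin b), S.Nonempty → S.card ≤ k + 1 →
    ¬ (∀ i, 0 ≤ cfire a b S D i)

/-- `D` is `k`-skeletal: `D` is `k`-stable and no legal nonempty borrow move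
produces a `k`-stable configuration. -/
def KSkeletal (a b k : ℕ) (D : Fin b → ℤ) : Prop :=
  KStable a b k D ∧ ∀ T : Finset (Fin b), T.Nonempty →
    (∀ i, 0 ≤ cborrow a b T D i) → ¬ KStable a b k (cborrow a b T D)

/-- `i` is poorer than `j` in configuration `D`. -/
def Poorer {b : ℕ} (D : Fin b → ℤ) (i j : Fin b) : Prop :=
  D i < D j ∨ (D i = D j ∧ i < j)

/-- `L` is the labeled path `lpath D`: a valid labeled path in which the north
step labeled `i` lies in column `D i`, i.e. is preceded by exactly `D i` east
steps.  (These conditions determine `L` uniquely.) -/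
def IsLpath (a b : ℕ) (D : Fin b → ℤ) (L : List (Option (Fin b))) : Prop :=
  IsLabeled a b L ∧
  ∀ m : ℕ, ∀ i : Fin b, L.getD m none = some i → ((L.take m).count none : ℤ) = D i


namespace KStableAuxSect

open List

lemma countP_isSome_eq_sum {b : ℕ} (M : List (Option (Fin b))) :
    M.countP (fun o => o.isSome) = ∑ j : Fin b, M.count (some j) := by
  induction M with
  | nil => simp
  | cons h t ih =>
    cases h with
    | none =>
      simp only [List.countP_cons, List.count_cons]
      simp [ih]
    | some j =>
      simp only [List.countP_cons, List.count_cons]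
      rw [Finset.sum_add_distrib, ← ih]
      have : (∑ x : Fin b, if (some j == some x) = true then 1 else 0) = 1 := by
        rw [Finset.sum_congr rfl (fun x _ => by
          simp only [beq_iff_eq, Option.some.injEq]
          rfl)]
        simp [Finset.sum_ite_eq']
      simp [this]

lemma count_le_add_lt (v : ℤ) (l : List ℤ) :
    l.countP (fun x => v ≤ x) + l.countP (fun x => x < v) = l.length := by
  induction l with
  | nil => simp
  | cons x t ih =>
    by_cases h : v ≤ x <;> simp [List.countP_cons, h, not_le.mp, not_le] <;> omega

lemma countP_ofFn {b : ℕ} (D : Fin b → ℤ) (p : ℤ → Bool) :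
    (List.ofFn D).countP p = (Finset.univ.filter (fun i => p (D i))).card := by
  rw [List.ofFn_eq_map, List.countP_map, List.countP_eq_length_filter]
  rw [Fin.univ_def]
  simp only [Finset.filter, Finset.card, Multiset.quot_mk_to_coe'', Multiset.filter_coe,
    Multiset.coe_card]
  rw [show (fun b => decide (p (D b) = true)) = (p ∘ D) by funext o; simp [Function.comp]]

lemma count_false_unlabel {b : ℕ} (M : List (Option (Fin b))) :
    (unlabel M).count false = M.count none := by
  unfold unlabel
  rw [List.count_eq_countP, List.countP_map, List.count_eq_countP]
  congr 1
  funext o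
  cases o <;> rfl

lemma count_true_unlabel {b : ℕ} (M : List (Option (Fin b))) :
    (unlabel M).count true = M.countP (fun o => o.isSome) := by
  unfold unlabel
  rw [List.count_eq_countP, List.countP_map]
  congr 1
  funext o
  cases o <;> rfl

lemma le_floor_iff (b : ℕ) (hb : 0 < b) (n : ℕ) (x : ℤ) :
    x ≤ ((n / b : ℕ) : ℤ) ↔ (b : ℤ) * x ≤ n := by
  rw [Int.natCast_ediv, Int.le_ediv_iff_mul_le (by exact_mod_cast hb)]
  constructor <;> intro h <;> linarith [mul_comm x (b:ℤ)]

lemma exists_nth_true (Q : List Bool) (t : ℕ) (ht : t < Q.count true) :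
    ∃ m, m < Q.length ∧ Q.getD m false = true ∧ (Q.drop (m+1)).count true = t := by
  induction Q with
  | nil => simp at ht
  | cons h T ih =>
    by_cases h' : t < T.count true
    · obtain ⟨m, hm, hget, hdrop⟩ := ih h'
      exact ⟨m+1, by simpa using hm, by simpa using hget, by simpa using hdrop⟩
    · cases h with
      | false =>
        exfalso
        simp [List.count_cons] at ht
        omega
      | true =>
        have hT : t = T.count true := by
          simp [List.count_cons] at ht
          omega
        exact ⟨0, by simp, by simp, by simpa using hT.symm⟩

variable {l : List ℤ}

lemma sorted_ge_count (hs : l.Pairwise (· ≥ ·)) {s : ℕ} (h1 : 1 ≤ s) (h2 : s ≤ l.length)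
    {v : ℤ} (hv : v = l[s-1]'(by omega)) :
    s ≤ l.countP (fun x => v ≤ x) := by
  haveI : Std.Refl (α := ℤ) (· ≥ ·) := ⟨fun x => le_refl x⟩
  have key : (l.take s).countP (fun x => v ≤ x) = s := by
    have hlen : (l.take s).length = s := by simp [h2]
    rw [List.countP_eq_length.mpr, hlen]
    intro x hx
    obtain ⟨j, hj, hxe⟩ := List.mem_iff_getElem.mp hx
    rw [List.getElem_take] at hxe
    subst hxe
    simp only [decide_eq_true_eq]
    have hj' : j < l.length := by rw [hlen] at hj; omega
    have := hs.rel_get_of_le (a := ⟨j, hj'⟩) (b := ⟨s-1, by omega⟩) (by simp; omega)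
    rw [hv]
    simpa using this
  have hsub : (l.take s).countP (fun x => v ≤ x) ≤ l.countP (fun x => v ≤ x) :=
    (List.take_sublist s l).countP_le
  omega

lemma sorted_gt_count (hs : l.Pairwise (· ≥ ·)) {s : ℕ} (h1 : 1 ≤ s) (h2 : s ≤ l.length)
    {v : ℤ} (hv : v = l[s-1]'(by omega)) :
    l.countP (fun x => v < x) ≤ s - 1 := by
  haveI : Std.Refl (α := ℤ) (· ≥ ·) := ⟨fun x => le_refl x⟩
  have hdrop : (l.drop (s-1)).countP (fun x => v < x) = 0 := by
    rw [List.countP_eq_zero]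
    intro x hx
    obtain ⟨j, hj, hxe⟩ := List.mem_iff_getElem.mp hx
    rw [List.getElem_drop] at hxe
    subst hxe
    simp only [decide_eq_true_eq, not_lt, hv]
    have hj' : s - 1 + j < l.length := by simp at hj; omega
    have := hs.rel_get_of_le (a := ⟨s-1, by omega⟩) (b := ⟨s-1+j, hj'⟩) (by simp)
    simpa using this
  have hsplit : l.countP (fun x => v < x) =
      (l.take (s-1)).countP (fun x => v < x) + (l.drop (s-1)).countP (fun x => v < x) := by
    conv_lhs => rw [← List.take_append_drop (s-1) l]
    rw [List.countP_append]
  have htk := List.countP_le_length (p := fun x => decide (v < x)) (l := l.take (s-1))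
  have hlen : (l.take (s-1)).length ≤ s - 1 := by simp
  omega

lemma sorted_le_getElem (hs : l.Pairwise (· ≥ ·)) {s : ℕ} (h1 : 1 ≤ s) (h2 : s ≤ l.length)
    {v : ℤ} (hc : s ≤ l.countP (fun x => v ≤ x)) : v ≤ l[s-1]'(by omega) := by
  by_contra h'
  push_neg at h'
  have hmono : l.countP (fun x => v ≤ x) ≤ l.countP (fun x => l[s-1]'(by omega) < x) :=
    List.countP_mono_left (fun x _ hx => by
      simp only [decide_eq_true_eq] at hx ⊢; exact lt_of_lt_of_le h' hx)
  have := sorted_gt_count hs h1 h2 (v := l[s-1]'(by omega)) rfl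
  omega

variable {a b : ℕ} {D : Fin b → ℤ} {L : List (Option (Fin b))}

lemma col_eq (hL : IsLpath a b D L) {m : ℕ} {i : Fin b} (hm : m < L.length)
    (he : L[m] = some i) : ((L.take m).count none : ℤ) = D i :=
  hL.2 m i (by rw [List.getD_eq_getElem _ _ hm, he])

lemma col_mono (hL : IsLpath a b D L) {m₁ m₂ : ℕ} {i₁ i₂ : Fin b}
    (h1 : m₁ < L.length) (h2 : m₂ < L.length) (e1 : L[m₁] = some i₁) (e2 : L[m₂] = some i₂)
    (hm : m₁ ≤ m₂) : D i₁ ≤ D i₂ := by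
  rw [← col_eq hL h1 e1, ← col_eq hL h2 e2]
  have hsub : (L.take m₁).Sublist (L.take m₂) := by
    rw [show L.take m₁ = (L.take m₂).take m₁ by rw [List.take_take, min_eq_left hm]]
    exact List.take_sublist _ _
  exact_mod_cast hsub.count_le none

lemma exists_pos (hL : IsLpath a b D L) (j : Fin b) :
    ∃ m, ∃ h : m < L.length, L[m] = some j := by
  have : some j ∈ L := List.count_pos_iff.mp (by rw [hL.1.2.1 j]; norm_num)
  obtain ⟨n, h, e⟩ := List.mem_iff_getElem.mp this
  exact ⟨n, h, e⟩

lemma rich_count (hL : IsLpath a b D L) {m : ℕ} {i : Fin b} (hm : m < L.length)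
    (he : L[m] = some i) :
    (List.ofFn D).countP (fun x => D i < x) ≤ (L.drop (m+1)).countP (fun o => o.isSome) := by
  rw [countP_ofFn, countP_isSome_eq_sum]
  set B := Finset.univ.filter (fun j : Fin b => decide (D i < D j)) with hB
  have hB1 : ∀ j ∈ B, 1 ≤ (L.drop (m+1)).count (some j) := by
    intro j hj
    rw [hB, Finset.mem_filter] at hj
    have hij : D i < D j := by simpa using hj.2
    obtain ⟨mj, hmj, ej⟩ := exists_pos hL j
    have hgt : m < mj := by
      by_contra hcon
      push_neg at hcon
      exact absurd (col_mono hL hmj hm ej he hcon) (not_le.mpr hij)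
    obtain ⟨d, rfl⟩ : ∃ d, mj = m + 1 + d := ⟨mj - (m+1), by omega⟩
    have hmem : some j ∈ L.drop (m+1) := by
      rw [List.mem_iff_getElem]
      exact ⟨d, by simp; omega, by rw [List.getElem_drop]; exact ej⟩
    exact List.count_pos_iff.mpr hmem
  calc B.card = ∑ _j ∈ B, 1 := by simp
    _ ≤ ∑ j ∈ B, (L.drop (m+1)).count (some j) := Finset.sum_le_sum hB1
    _ ≤ ∑ j : Fin b, (L.drop (m+1)).count (some j) :=
        Finset.sum_le_sum_of_subset (Finset.filter_subset _ _)

lemma poor_count (hL : IsLpath a b D L) {m : ℕ} {i : Fin b} (hm : m < L.length)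
    (he : L[m] = some i) :
    (List.ofFn D).countP (fun x => x < D i) ≤ (L.take m).countP (fun o => o.isSome) := by
  rw [countP_ofFn, countP_isSome_eq_sum]
  set B := Finset.univ.filter (fun j : Fin b => decide (D j < D i)) with hB
  have hB1 : ∀ j ∈ B, 1 ≤ (L.take m).count (some j) := by
    intro j hj
    rw [hB, Finset.mem_filter] at hj
    have hij : D j < D i := by simpa using hj.2
    obtain ⟨mj, hmj, ej⟩ := exists_pos hL j
    have hlt : mj < m := by
      by_contra hcon
      push_neg at hcon
      exact absurd (col_mono hL hm hmj he ej hcon) (not_le.mpr hij)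
    have hmem : some j ∈ L.take m := by
      rw [List.mem_iff_getElem]
      exact ⟨mj, by simp; omega, by rw [List.getElem_take]; exact ej⟩
    exact List.count_pos_iff.mpr hmem
  calc B.card = ∑ _j ∈ B, 1 := by simp
    _ ≤ ∑ j ∈ B, (L.take m).count (some j) := Finset.sum_le_sum hB1
    _ ≤ ∑ j : Fin b, (L.take m).count (some j) :=
        Finset.sum_le_sum_of_subset (Finset.filter_subset _ _)

lemma kStable_iff_min (a b k : ℕ) (D : Fin b → ℤ) (hD : ∀ i, 0 ≤ D i) :
    KStable a b k D ↔ ∀ S : Finset (Fin b), S.Nonempty → S.card ≤ k + 1 →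
      ∃ i ∈ S, D i ≤ (((b - S.card) * a / b : ℕ) : ℤ) := by
  constructor
  · rintro ⟨-, h2⟩ S hS hcard
    have h3 := h2 S hS hcard
    push_neg at h3
    obtain ⟨i, hi⟩ := h3
    by_cases him : i ∈ S
    · refine ⟨i, him, ?_⟩
      simp only [cfire, him, if_true] at hi
      omega
    · exfalso
      simp only [cfire, him, if_false] at hi
      have h6 := hD i
      have h7 : (0:ℤ) ≤ ((S.card * a / b : ℕ) : ℤ) := Int.natCast_nonneg _
      omega
  · intro h
    refine ⟨hD, fun S hS hcard hall => ?_⟩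
    obtain ⟨i, him, hle⟩ := h S hS hcard
    have h5 := hall i
    simp only [cfire, him, if_true] at h5
    omega

end KStableAuxSect

open KStableAuxSect in
/-- `D ≥ 0` is `k`-stable iff for every `1 ≤ s ≤ min(k+1,b)` the
`s`-th largest chip count is at most `⌊(b−s)·a/b⌋`; equivalently, iff the last
`k+1` north steps of `lpath D` start on or above the line `b·x = a·y`. -/
theorem kStable_iff (a b k : ℕ) (ha : 0 < a) (hb : 0 < b) (hab : a.Coprime b)
    (hk : k < b) (D : Fin b → ℤ) (hD : ∀ i, 0 ≤ D i) :
    (KStable a b k D ↔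
      ∀ l : List ℤ, l.Perm (List.ofFn D) → l.Pairwise (· ≥ ·) →
        ∀ s : ℕ, 1 ≤ s → s ≤ min (k + 1) b →
          l.getD (s - 1) 0 ≤ (((b - s) * a / b : ℕ) : ℤ)) ∧
    (∀ L : List (Option (Fin b)), IsLpath a b D L →
      (KStable a b k D ↔ R1 a b k (unlabel L))) := by
  haveI : IsTotal ℤ (· ≥ ·) := ⟨fun x y => le_total y x⟩
  haveI : IsTrans ℤ (· ≥ ·) := ⟨fun x y z h1 h2 => le_trans h2 h1⟩
  haveI : IsAntisymm ℤ (· ≥ ·) := ⟨fun x y h1 h2 => le_antisymm h2 h1⟩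
  set l₀ := List.insertionSort (· ≥ ·) (List.ofFn D) with hl₀
  have hperm : l₀.Perm (List.ofFn D) := List.perm_insertionSort _ _
  have hsort : l₀.Pairwise (· ≥ ·) := List.pairwise_insertionSort _ _
  have hlen0 : l₀.length = b := by rw [hperm.length_eq, List.length_ofFn]
  have hP : KStable a b k D ↔ ∀ s : ℕ, 1 ≤ s → s ≤ min (k+1) b →
      l₀.getD (s-1) 0 ≤ (((b - s) * a / b : ℕ) : ℤ) := by
    rw [kStable_iff_min a b k D hD]
    constructor
    · intro h s h1 h2
      have hsb : s ≤ b := le_trans h2 (min_le_right _ _)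
      have hsl : s - 1 < l₀.length := by omega
      rw [List.getD_eq_getElem l₀ 0 hsl]
      have hcount : s ≤ l₀.countP (fun x => l₀[s-1]'hsl ≤ x) :=
        sorted_ge_count hsort h1 (by omega) rfl
      rw [hperm.countP_eq, countP_ofFn] at hcount
      obtain ⟨S, hSsub, hScard⟩ := Finset.exists_subset_card_eq hcount
      have hSne : S.Nonempty := Finset.card_pos.mp (by omega)
      obtain ⟨i, hiS, hle⟩ := h S hSne (by omega)
      have hvi : l₀[s-1]'hsl ≤ D i := by
        have hf := hSsub hiS
        simp only [Finset.mem_filter, decide_eq_true_eq] at hf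
        exact hf.2
      rw [hScard] at hle
      exact le_trans hvi hle
    · intro h S hSne hScard
      have h1 : 1 ≤ S.card := Finset.card_pos.mpr hSne
      have hsb : S.card ≤ b := by simpa using Finset.card_le_univ S
      have hsl : S.card - 1 < l₀.length := by omega
      have hgetd := h S.card h1 (by omega)
      rw [List.getD_eq_getElem l₀ 0 hsl] at hgetd
      by_contra hcon
      push_neg at hcon
      have hsub : S ⊆ Finset.univ.filter
          (fun j : Fin b => decide (l₀[S.card-1]'hsl < D j)) := by
        intro i hi
        simp only [Finset.mem_filter, Finset.mem_univ, true_and, decide_eq_true_eq]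
        exact lt_of_le_of_lt hgetd (hcon i hi)
      have hcard2 : S.card ≤ l₀.countP (fun x => l₀[S.card-1]'hsl < x) := by
        rw [hperm.countP_eq, countP_ofFn]
        exact le_trans (Finset.card_le_card hsub) (le_refl _)
      have := sorted_gt_count hsort h1 (by omega) (v := l₀[S.card-1]'hsl) rfl
      omega
  have hmain1 : KStable a b k D ↔ ∀ l : List ℤ, l.Perm (List.ofFn D) → l.Pairwise (· ≥ ·) →
      ∀ s : ℕ, 1 ≤ s → s ≤ min (k + 1) b →
        l.getD (s - 1) 0 ≤ (((b - s) * a / b : ℕ) : ℤ) := by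
    rw [hP]
    constructor
    · intro h l hp hs
      have hle : l = l₀ := List.Perm.eq_of_pairwise' hs hsort (hp.trans hperm.symm)
      rw [hle]
      exact h
    · intro h
      exact h l₀ hperm hsort
  refine ⟨hmain1, fun L hL => ?_⟩
  rw [hP]
  have hPb : L.countP (fun o => o.isSome) = b := by
    rw [countP_isSome_eq_sum]
    simp [hL.1.2.1]
  have hQt : (unlabel L).count true = b := by rw [count_true_unlabel, hPb]
  have hQlen : (unlabel L).length = L.length := by simp [unlabel]
  -- basic facts about a north step at position m
  have key : ∀ m : ℕ, ∀ hm : m < L.length, ∀ i : Fin b, L[m] = some i →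
      ((unlabel L).take m).count true + 1 + ((unlabel L).drop (m+1)).count true = b ∧
      lvlAt a b (unlabel L) m =
        (a : ℤ) * (((unlabel L).take m).count true : ℤ) - (b : ℤ) * D i := by
    intro m hm i he
    have hQm : (unlabel L)[m]'(by omega) = true := by
      simp [unlabel, List.getElem_map, he]
    constructor
    · have hsplit : (unlabel L).count true =
          ((unlabel L).take m).count true + ((unlabel L).drop m).count true := by
        conv_lhs => rw [← List.take_append_drop m (unlabel L), List.count_append]
      have hdm : (unlabel L).drop m = true :: (unlabel L).drop (m+1) := by
        rw [List.drop_eq_getElem_cons (by omega), hQm]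
      rw [hdm, List.count_cons] at hsplit
      simp at hsplit
      omega
    · unfold lvlAt
      have htk : (unlabel L).take m = unlabel (L.take m) := by
        simp [unlabel, List.map_take]
      rw [htk, count_false_unlabel, col_eq hL hm he, ← htk]
  constructor
  · -- stable condition → R1
    intro h m hm hget htk
    rw [hQlen] at hm
    have hQm : (unlabel L)[m]'(by omega) = true := by
      rw [← List.getD_eq_getElem (unlabel L) false (by omega)]
      exact hget
    obtain ⟨i, he⟩ : ∃ i, L[m] = some i := by
      have : (L[m]).isSome = true := by
        simpa [unlabel, List.getElem_map] using hQm
      exact Option.isSome_iff_exists.mp this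
    obtain ⟨hsum, hlvl⟩ := key m hm i he
    set t := ((unlabel L).drop (m+1)).count true with ht
    set ct := ((unlabel L).take m).count true with hct
    have hpoor := poor_count hL hm he
    have hctt : (L.take m).countP (fun o => o.isSome) = ((unlabel L).take m).count true := by
      rw [show (unlabel L).take m = unlabel (L.take m) from by simp [unlabel, List.map_take],
        count_true_unlabel]
    rw [hctt] at hpoor
    have hsplit2 := count_le_add_lt (D i) (List.ofFn D)
    rw [List.length_ofFn] at hsplit2
    have hge : t + 1 ≤ (List.ofFn D).countP (fun x => D i ≤ x) := by omega
    rw [← hperm.countP_eq] at hge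
    have hDi : D i ≤ l₀[t]'(by omega) :=
      sorted_le_getElem hsort (s := t+1) (by omega) (by omega) (by simpa using hge)
    have hgoal := h (t+1) (by omega) (by omega)
    rw [List.getD_eq_getElem l₀ 0 (by omega : t + 1 - 1 < l₀.length)] at hgoal
    have hle2 : D i ≤ (((b - (t+1)) * a / b : ℕ) : ℤ) := by
      refine le_trans ?_ hgoal
      simpa using hDi
    rw [le_floor_iff b hb _ _] at hle2
    rw [hlvl]
    have hcast : ((b - (t+1)) * a : ℕ) = ct * a := by
      have : b - (t+1) = ct := by omega
      rw [this]
    rw [hcast] at hle2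
    push_cast at hle2 ⊢
    linarith
  · -- R1 → stable condition
    intro h s h1 h2
    have hsb : s ≤ b := le_trans h2 (min_le_right _ _)
    have hsk : s ≤ k + 1 := le_trans h2 (min_le_left _ _)
    obtain ⟨m, hm, hget, hdrop⟩ := exists_nth_true (unlabel L) (s-1) (by omega)
    have hmL : m < L.length := by omega
    have hQm : (unlabel L)[m]'(by omega) = true := by
      rw [← List.getD_eq_getElem (unlabel L) false (by omega)]
      exact hget
    obtain ⟨i, he⟩ : ∃ i, L[m] = some i := by
      have : (L[m]).isSome = true := by
        simpa [unlabel, List.getElem_map] using hQm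
      exact Option.isSome_iff_exists.mp this
    obtain ⟨hsum, hlvl⟩ := key m hmL i he
    set ct := ((unlabel L).take m).count true with hct
    have hlv := h m hm hget (by rw [hdrop]; omega)
    rw [hlvl] at hlv
    have hbd : (b : ℤ) * D i ≤ ((b - s) * a : ℕ) := by
      have hcteq : b - s = ct := by omega
      rw [hcteq]
      push_cast
      linarith
    rw [← le_floor_iff b hb _ _] at hbd
    have hsl : s - 1 < l₀.length := by omega
    rw [List.getD_eq_getElem l₀ 0 hsl]
    refine le_trans ?_ hbd
    -- l₀[s-1] ≤ D i
    have hrich := rich_count hL hmL he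
    have hdt : (L.drop (m+1)).countP (fun o => o.isSome) = s - 1 := by
      rw [← count_true_unlabel]
      have : unlabel (L.drop (m+1)) = (unlabel L).drop (m+1) := by
        simp [unlabel, List.map_drop]
      rw [this, hdrop]
    rw [hdt] at hrich
    by_contra hcon
    push_neg at hcon
    have hge := sorted_ge_count hsort h1 (by omega : s ≤ l₀.length) (v := l₀[s-1]'hsl) rfl
    have hmono : l₀.countP (fun x => l₀[s-1]'hsl ≤ x) ≤ l₀.countP (fun x => D i < x) :=
      List.countP_mono_left (fun x _ hx => by
        simp only [decide_eq_true_eq] at hx ⊢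
        exact lt_of_lt_of_le hcon hx)
    have hmm := hperm.countP_eq (fun x => decide (D i < x))
    have hmm2 := hperm.countP_eq (fun x => decide (l₀[s-1]'hsl ≤ x))
    omega
end

section
/- Let a, b be coprime positive integers and fix k with 0 ≤ k < b. Let Q ∈ P(N^b E^a) be a k-stable path (i.e., Q satisfies (R1)). Then Q is not k-skeletal if and only if there exists s ∈ {1,…,b} such that the min-level point v_s lies on Q, Q reaches v_s by an east step, and the cyclic shift Q_{v_s} is k-stable. -/
/-- The min-level points: `v_s = (⌊s·a/b⌋, s)` for `1 ≤ s ≤ b−1` and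
`v_b = (a−1, b)`. -/
def minLvlPt (a b s : ℕ) : ℕ × ℕ :=
  if s = b then (a - 1, b) else (s * a / b, s)

/-- The path `Q` arrives at the min-level point `v_s` by an east step, the
point `v_s` being reached after the first `m` steps of `Q`. -/
def ArrivesByEast (a b : ℕ) (Q : List Bool) (s m : ℕ) : Prop :=
  0 < m ∧ m ≤ Q.length ∧ Q.getD (m - 1) true = false ∧
    ((Q.take m).count false, (Q.take m).count true) = minLvlPt a b s

namespace NSA

lemma count_tf (Q : List Bool) : Q.count true + Q.count false = Q.length := by
  induction Q with
  | nil => simp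
  | cons h t ih => cases h <;> simp [List.count_cons] <;> omega

/-- prefix counts of the doubled word -/
def ct (Q : List Bool) (c : Bool) (i : ℕ) : ℕ := ((Q ++ Q).take i).count c

/-- level after `i` steps of the doubled word -/
def D (a b : ℕ) (Q : List Bool) (i : ℕ) : ℤ :=
  (a : ℤ) * ct Q true i - (b : ℤ) * ct Q false i

lemma ct_add (Q : List Bool) (c : Bool) (i j : ℕ) :
    ct Q c (i + j) = ct Q c i + (((Q ++ Q).drop i).take j).count c := by
  unfold ct; rw [List.take_add, List.count_append]

lemma ct_mono (Q : List Bool) (c : Bool) {i j : ℕ} (h : i ≤ j) :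
    ct Q c i ≤ ct Q c j := by
  have := ct_add Q c i (j - i)
  rw [Nat.add_sub_cancel' h] at this; omega

lemma take_W {Q : List Bool} {i : ℕ} (h : i ≤ Q.length) :
    (Q ++ Q).take i = Q.take i := by
  rw [List.take_append, Nat.sub_eq_zero_of_le h]
  simp

lemma ct_low (Q : List Bool) (c : Bool) {i : ℕ} (h : i ≤ Q.length) :
    ct Q c i = (Q.take i).count c := by
  unfold ct; rw [take_W h]

lemma lvl_D (a b : ℕ) (Q : List Bool) {m : ℕ} (h : m ≤ Q.length) :
    lvlAt a b Q m = D a b Q m := by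
  unfold lvlAt D
  rw [ct_low Q true h, ct_low Q false h]

lemma ct_len (Q : List Bool) (c : Bool) : ct Q c Q.length = Q.count c := by
  unfold ct; rw [take_W le_rfl, List.take_length]

lemma ct_cycle (Q : List Bool) (c : Bool) {i : ℕ} (h : i ≤ Q.length) :
    ct Q c (Q.length + i) = Q.count c + ct Q c i := by
  have h1 := ct_add Q c Q.length i
  rw [List.drop_left] at h1
  rw [h1, ct_len, ct_low Q c h]

lemma D_zero (a b : ℕ) (Q : List Bool) : D a b Q 0 = 0 := by simp [D, ct]

lemma D_len {a b : ℕ} {Q : List Bool} (hQt : Q.count true = b)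
    (hQf : Q.count false = a) : D a b Q Q.length = 0 := by
  unfold D; rw [ct_len, ct_len, hQt, hQf]; ring

lemma D_cycle {a b : ℕ} {Q : List Bool} (hQt : Q.count true = b)
    (hQf : Q.count false = a) {i : ℕ} (h : i ≤ Q.length) :
    D a b Q (Q.length + i) = D a b Q i := by
  unfold D
  rw [ct_cycle Q true h, ct_cycle Q false h, hQt, hQf]
  push_cast; ring

lemma D_succ (a b : ℕ) (Q : List Bool) {i : ℕ} (h : i < (Q ++ Q).length) :
    D a b Q (i + 1) =
      D a b Q i + (if (Q ++ Q).getD i false = true then (a : ℤ) else -(b : ℤ)) := by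
  have e : (Q ++ Q).take (i + 1) = (Q ++ Q).take i ++ [(Q ++ Q)[i]] := by
    rw [List.take_succ, List.getElem?_eq_getElem h]; rfl
  have hg : (Q ++ Q).getD i false = (Q ++ Q)[i] := List.getD_eq_getElem _ _ h
  unfold D ct
  rw [e, List.count_append, List.count_append]
  cases hB : (Q ++ Q)[i] with
  | false => rw [hg, hB]; simp; push_cast; ring
  | true => rw [hg, hB]; simp; push_cast; ring

lemma rot_eq {Q : List Bool} {p : ℕ} (h : p ≤ Q.length) :
    Q.rotate p = ((Q ++ Q).drop p).take Q.length := by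
  have h1 : List.take Q.length (Q.drop p) = Q.drop p :=
    List.take_of_length_le (by rw [List.length_drop]; omega)
  rw [List.rotate_eq_drop_append_take h, List.drop_append,
    Nat.sub_eq_zero_of_le h, List.drop_zero, List.take_append, h1,
    List.length_drop, Nat.sub_sub_self h]

lemma rot_take {Q : List Bool} {p : ℕ} (hp : p ≤ Q.length) {j : ℕ}
    (hj : j ≤ Q.length) (c : Bool) :
    ct Q c p + ((Q.rotate p).take j).count c = ct Q c (p + j) := by
  rw [rot_eq hp, List.take_take, min_eq_left hj, ct_add]

lemma rot_lvl {a b : ℕ} {Q : List Bool} {p : ℕ} (hp : p ≤ Q.length) {j : ℕ}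
    (hj : j ≤ Q.length) :
    lvlAt a b (Q.rotate p) j = D a b Q (p + j) - D a b Q p := by
  have h1 := rot_take hp hj true
  have h2 := rot_take hp hj false
  unfold lvlAt D
  have e1 : (((Q.rotate p).take j).count true : ℤ)
      = (ct Q true (p + j) : ℤ) - (ct Q true p : ℤ) := by omega
  have e2 : (((Q.rotate p).take j).count false : ℤ)
      = (ct Q false (p + j) : ℤ) - (ct Q false p : ℤ) := by omega
  rw [e1, e2]; ring

lemma rot_getD {Q : List Bool} {p : ℕ} (hp : p ≤ Q.length) {j : ℕ}
    (hj : j < Q.length) :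
    (Q.rotate p).getD j false = (Q ++ Q).getD (p + j) false := by
  have hlr : j < (Q.rotate p).length := by rw [List.length_rotate]; exact hj
  have h2 : p + j < (Q ++ Q).length := by rw [List.length_append]; omega
  rw [List.getD_eq_getElem _ _ hlr, List.getD_eq_getElem _ _ h2]
  simp only [rot_eq hp]
  rw [List.getElem_take, List.getElem_drop]

lemma rot_dropcount {b : ℕ} {Q : List Bool} (hQt : Q.count true = b) {p : ℕ}
    (hp : p ≤ Q.length) {j : ℕ} (hj : j < Q.length) :
    ((Q.rotate p).drop (j + 1)).count true + ct Q true (p + j + 1)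
      = b + ct Q true p := by
  have h1 : ((Q.rotate p).take (j + 1)).count true
      + ((Q.rotate p).drop (j + 1)).count true = b := by
    rw [← List.count_append, List.take_append_drop,
      (List.rotate_perm Q p).count_eq, hQt]
  have h2 := rot_take hp (show j + 1 ≤ Q.length by omega) true
  rw [← Nat.add_assoc] at h2
  omega

lemma good_iff {a b k : ℕ} {Q : List Bool} (hQt : Q.count true = b) {p : ℕ}
    (hp : p ≤ Q.length) :
    R1 a b k (Q.rotate p) ↔
      ∀ j < Q.length, (Q ++ Q).getD (p + j) false = true →
        b + ct Q true p ≤ k + ct Q true (p + j + 1) →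
        D a b Q p ≤ D a b Q (p + j) := by
  unfold R1
  constructor
  · intro H j hj hN hcnt
    have hdc := rot_dropcount hQt hp hj
    have := H j (by rw [List.length_rotate]; exact hj)
      (by rw [rot_getD hp hj]; exact hN) (by omega)
    rw [rot_lvl hp (le_of_lt hj)] at this
    linarith
  · intro H j hj hN hcnt
    rw [List.length_rotate] at hj
    have hdc := rot_dropcount hQt hp hj
    rw [rot_lvl hp (le_of_lt hj)]
    have := H j hj (by rw [← rot_getD hp hj]; exact hN) (by omega)
    linarith

lemma Wget_low {Q : List Bool} {i : ℕ} (h : i < Q.length) :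
    (Q ++ Q).getD i false = Q.getD i false := by
  have h2 : i < (Q ++ Q).length := by rw [List.length_append]; omega
  rw [List.getD_eq_getElem _ _ h2, List.getD_eq_getElem _ _ h,
    List.getElem_append_left h]

lemma Wget_high {Q : List Bool} {i : ℕ} (h : i < Q.length) :
    (Q ++ Q).getD (Q.length + i) false = Q.getD i false := by
  have h2 : Q.length + i < (Q ++ Q).length := by rw [List.length_append]; omega
  rw [List.getD_eq_getElem _ _ h2, List.getD_eq_getElem _ _ h]
  rw [List.getElem_append_right (by omega)]
  congr 1
  omega

lemma descent {a b k : ℕ} {Q : List Bool} (hQt : Q.count true = b)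
    (hQf : Q.count false = a) (hb : 0 < b) {p : ℕ} (hp0 : 0 < p)
    (hpn : p < Q.length) (hDlt : (b : ℤ) < D a b Q p)
    (hG : R1 a b k (Q.rotate p)) :
    ∃ q, 0 < q ∧ q < Q.length ∧ 0 < D a b Q q ∧ D a b Q q < D a b Q p ∧
      R1 a b k (Q.rotate q) := by
  set d := D a b Q p with hd
  have hwit : 1 ≤ Q.length - p ∧ D a b Q (p + (Q.length - p)) < d := by
    constructor
    · omega
    · rw [Nat.add_sub_cancel' (le_of_lt hpn), D_len hQt hQf]
      linarith
  classical
  let P : ℕ → Prop := fun j => 1 ≤ j ∧ D a b Q (p + j) < d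
  have hPex : ∃ j, P j := ⟨Q.length - p, hwit⟩
  let j0 := Nat.find hPex
  have hj0 : P j0 := Nat.find_spec hPex
  have hj0le : j0 ≤ Q.length - p := Nat.find_le hwit
  have hbelow : ∀ j < j0, d ≤ D a b Q (p + j) := by
    intro j hjlt
    rcases Nat.eq_zero_or_pos j with h0 | h1
    · subst h0; simp [hd]
    · have := Nat.find_min hPex hjlt
      simp only [P, not_and, not_lt] at this
      exact this h1
  set q := p + j0 with hq
  have hqle : q ≤ Q.length := by omega
  have hq1 : 1 ≤ j0 := hj0.1
  have hstep := D_succ a b Q (i := q - 1) (by rw [List.length_append]; omega)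
  rw [show q - 1 + 1 = q by omega] at hstep
  have hup : d ≤ D a b Q (q - 1) := by
    have := hbelow (j0 - 1) (by omega)
    rw [show p + (j0 - 1) = q - 1 by omega] at this
    exact this
  have hqlt : D a b Q q < d := by rw [hq]; exact hj0.2
  have heast : ¬ ((Q ++ Q).getD (q - 1) false = true) := by
    intro hN
    rw [if_pos hN] at hstep
    have hanneg : (0:ℤ) ≤ (a:ℤ) := Int.natCast_nonneg a
    linarith
  rw [if_neg heast] at hstep
  have hDq : (0:ℤ) < D a b Q q := by linarith
  have hqlen : q < Q.length := by
    rcases Nat.lt_or_ge q Q.length with h | h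
    · exact h
    · have : q = Q.length := by omega
      rw [this, D_len hQt hQf] at hDq; linarith
  refine ⟨q, by omega, hqlen, hDq, hqlt, ?_⟩
  rw [good_iff hQt (le_of_lt hqlen)]
  rw [good_iff hQt (le_of_lt hpn)] at hG
  intro j hj hN hcnt
  by_cases hA : p + Q.length ≤ q + j
  · set r := q + j - Q.length with hr
    have hrp : p ≤ r := by omega
    have hrq : r < q := by omega
    have hrD : d ≤ D a b Q r := by
      have := hbelow (r - p) (by omega)
      rw [show p + (r - p) = r by omega] at this
      exact this
    have : D a b Q (q + j) = D a b Q r := by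
      rw [show q + j = Q.length + r by omega]
      exact D_cycle hQt hQf (by omega)
    linarith
  · push_neg at hA
    have hj' : q + j - p < Q.length := by omega
    have := hG (q + j - p) hj'
      (by rw [show p + (q + j - p) = q + j by omega]; exact hN)
      (by
        have hm := ct_mono Q true (show p ≤ q by omega)
        rw [show p + (q + j - p) + 1 = q + j + 1 by omega]
        omega)
    rw [show p + (q + j - p) = q + j by omega] at this
    linarith

lemma reach {a b k : ℕ} {Q : List Bool} (hQt : Q.count true = b)
    (hQf : Q.count false = a) (hb : 0 < b) :
    ∀ d : ℕ, ∀ p, 0 < p → p < Q.length → 0 < D a b Q p → D a b Q p ≤ (d : ℤ) →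
      R1 a b k (Q.rotate p) →
      ∃ q, 0 < q ∧ q < Q.length ∧ 0 < D a b Q q ∧ D a b Q q ≤ (b : ℤ) ∧
        R1 a b k (Q.rotate q) := by
  intro d
  induction d with
  | zero => intro p _ _ h1 h2 _; exfalso; omega
  | succ d ih =>
    intro p hp0 hpn hpos hle hG
    by_cases hble : D a b Q p ≤ (b : ℤ)
    · exact ⟨p, hp0, hpn, hpos, hble, hG⟩
    · push_neg at hble
      obtain ⟨q, hq0, hqn, hqpos, hqlt, hqG⟩ := descent hQt hQf hb hp0 hpn hble hG
      exact ih q hq0 hqn hqpos (by push_cast; push_cast at hle; linarith) hqG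

end NSA

theorem not_skeletal_iff_minlvl (a b k : ℕ) (ha : 0 < a) (hb : 0 < b)
    (hab : a.Coprime b) (hk : k < b) (Q : List Bool) (hQ : IsPath a b Q)
    (hst : R1 a b k Q) :
    ¬ SkeletalPath a b k Q ↔
      ∃ s m : ℕ, 1 ≤ s ∧ s ≤ b ∧ ArrivesByEast a b Q s m ∧ R1 a b k (Q.rotate m) := by
  obtain ⟨hQt, hQf⟩ := hQ
  constructor
  · intro hns
    have h1 : ¬ ∀ m ≤ Q.length, 0 < lvlAt a b Q m → ¬ R1 a b k (Q.rotate m) :=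
      fun h => hns ⟨hst, h⟩
    push_neg at h1
    obtain ⟨m0, hm0le, hm0pos, hm0R⟩ := h1
    have hD0 : 0 < NSA.D a b Q m0 := by rw [← NSA.lvl_D a b Q hm0le]; exact hm0pos
    have hm00 : 0 < m0 := by
      rcases Nat.eq_zero_or_pos m0 with h | h
      · rw [h, NSA.D_zero] at hD0; exact absurd hD0 (by norm_num)
      · exact h
    have hm0n : m0 < Q.length := by
      rcases Nat.lt_or_ge m0 Q.length with h | h
      · exact h
      · have he : m0 = Q.length := by omega
        rw [he, NSA.D_len hQt hQf] at hD0
        exact absurd hD0 (by norm_num)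
    obtain ⟨q, hq0, hqn, hqpos, hqb, hqG⟩ :=
      NSA.reach hQt hQf hb (NSA.D a b Q m0).toNat m0 hm00 hm0n hD0 (by omega) hm0R
    have hqle : q ≤ Q.length := le_of_lt hqn
    have hstep := NSA.D_succ a b Q (i := q - 1) (by rw [List.length_append]; omega)
    rw [show q - 1 + 1 = q by omega] at hstep
    have hWlow : (Q ++ Q).getD (q - 1) false = Q.getD (q - 1) false :=
      NSA.Wget_low (by omega)
    -- the step arriving at q is an east step
    have heast : Q.getD (q - 1) false = false := by
      by_contra hN
      have hN' : Q.getD (q - 1) false = true := by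
        cases hg : Q.getD (q - 1) false
        · exact absurd hg hN
        · rfl
      have hgood := (NSA.good_iff hQt hqle).mp hqG (Q.length - 1) (by omega)
        (by
          rw [show q + (Q.length - 1) = Q.length + (q - 1) by omega]
          rw [NSA.Wget_high (by omega)]
          exact hN')
        (by
          rw [show q + (Q.length - 1) + 1 = Q.length + q by omega]
          rw [NSA.ct_cycle Q true hqle, hQt]
          omega)
      rw [show q + (Q.length - 1) = Q.length + (q - 1) by omega,
        NSA.D_cycle hQt hQf (by omega)] at hgood
      rw [hWlow, hN', if_pos rfl] at hstep
      have hapos : (0:ℤ) < (a:ℤ) := by exact_mod_cast ha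
      linarith
    -- coordinates of the point reached after q steps
    have hEgetD : Q.getD (q - 1) true = false := by
      rw [List.getD_eq_getElem _ _ (show q - 1 < Q.length by omega)]
      rw [List.getD_eq_getElem _ _ (show q - 1 < Q.length by omega)] at heast
      exact heast
    set t := (Q.take q).count true with htdef
    set f := (Q.take q).count false with hfdef
    have hct : NSA.ct Q true q = t := NSA.ct_low Q true hqle
    have hcf : NSA.ct Q false q = f := NSA.ct_low Q false hqle
    have hDval : NSA.D a b Q q = (a:ℤ) * t - (b:ℤ) * f := by
      rw [NSA.D, hct, hcf]
    have htb : t ≤ b := by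
      have h := NSA.ct_mono Q true hqle
      rw [NSA.ct_len, hQt, hct] at h; exact h
    have hfa : f ≤ a := by
      have h := NSA.ct_mono Q false hqle
      rw [NSA.ct_len, hQf, hcf] at h; exact h
    rw [hDval] at hqpos hqb
    have hbposZ : (0:ℤ) < (b:ℤ) := by exact_mod_cast hb
    by_cases htcase : t = b
    · -- the point is v_b = (a-1, b)
      refine ⟨b, q, hb, le_rfl, ⟨hq0, hqle, hEgetD, ?_⟩, hqG⟩
      have hflt : f < a := by
        by_contra hge
        push_neg at hge
        have hN1 : a * t ≤ b * f := by
          calc a * t ≤ a * b := Nat.mul_le_mul_left a htb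
            _ ≤ f * b := Nat.mul_le_mul_right b hge
            _ = b * f := Nat.mul_comm f b
        have hZ1 : ((a * t : ℕ) : ℤ) ≤ ((b * f : ℕ) : ℤ) := by exact_mod_cast hN1
        push_cast at hZ1
        linarith
      have hfa1 : f = a - 1 := by
        by_contra hne
        have hge2 : 2 ≤ a - f := by omega
        have hsub : ((a - f : ℕ) : ℤ) = (a:ℤ) - (f:ℤ) := by
          push_cast [Nat.cast_sub (le_of_lt hflt)]; ring
        have hrw : (a:ℤ) * t - (b:ℤ) * f = (b:ℤ) * ((a:ℤ) - (f:ℤ)) := by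
          rw [htcase]; push_cast; ring
        rw [hrw] at hqb
        have h2 : (2:ℤ) ≤ (a:ℤ) - (f:ℤ) := by omega
        have hmul : (b:ℤ) * 2 ≤ (b:ℤ) * ((a:ℤ) - (f:ℤ)) :=
          mul_le_mul_of_nonneg_left h2 (le_of_lt hbposZ)
        linarith
      simp only [minLvlPt, eq_self_iff_true, if_true]
      show (f, t) = (a - 1, b)
      rw [hfa1, htcase]
    · -- the point is v_t = (⌊t·a/b⌋, t)
      have htlt : t < b := by omega
      have ht1 : 1 ≤ t := by
        by_contra h
        have ht0 : t = 0 := by omega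
        rw [ht0] at hqpos
        have hfz : (0:ℤ) ≤ (b:ℤ) * (f:ℤ) :=
          mul_nonneg (Int.natCast_nonneg b) (Int.natCast_nonneg f)
        norm_num at hqpos
        linarith
      refine ⟨t, q, ht1, le_of_lt htlt, ⟨hq0, hqle, hEgetD, ?_⟩, hqG⟩
      have hlow : b * f < a * t := by
        have h' : (b:ℤ) * (f:ℤ) < (a:ℤ) * (t:ℤ) := by linarith
        exact_mod_cast h'
      have hne : (a:ℤ) * t - (b:ℤ) * f ≠ (b:ℤ) := by
        intro heq
        have hZ : ((a * t : ℕ) : ℤ) = ((b * (f + 1) : ℕ) : ℤ) := by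
          push_cast; linarith
        have hN2 : a * t = b * (f + 1) := by exact_mod_cast hZ
        have hdvd : b ∣ a * t := ⟨f + 1, hN2⟩
        have hdt : b ∣ t := Nat.Coprime.dvd_of_dvd_mul_left hab.symm hdvd
        have := Nat.le_of_dvd (by omega) hdt
        omega
      have hhigh : a * t < b * (f + 1) := by
        have h' : (a:ℤ) * (t:ℤ) - (b:ℤ) * (f:ℤ) < (b:ℤ) := lt_of_le_of_ne hqb hne
        have h'' : (a:ℤ) * (t:ℤ) < (b:ℤ) * ((f:ℤ) + 1) := by linarith
        exact_mod_cast h''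
      have hdiv : t * a / b = f := by
        apply Nat.div_eq_of_lt_le
        · calc f * b = b * f := Nat.mul_comm f b
            _ ≤ a * t := le_of_lt hlow
            _ = t * a := Nat.mul_comm a t
        · calc t * a = a * t := Nat.mul_comm t a
            _ < b * (f + 1) := hhigh
            _ = (f + 1) * b := Nat.mul_comm b (f + 1)
      simp only [minLvlPt, if_neg htcase]
      show (f, t) = (t * a / b, t)
      rw [hdiv]
  · rintro ⟨s, m, hs1, hsb, ⟨hm0, hmle, hE, hpair⟩, hR⟩ hSk
    apply hSk.2 m hmle ?_ hR
    by_cases hscase : s = b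
    · rw [minLvlPt, if_pos hscase] at hpair
      have hf : (Q.take m).count false = a - 1 := congrArg Prod.fst hpair
      have ht : (Q.take m).count true = b := congrArg Prod.snd hpair
      rw [lvlAt, hf, ht]
      have hc : ((a - 1 : ℕ) : ℤ) = (a:ℤ) - 1 := by
        push_cast [Nat.cast_sub ha]; ring
      rw [hc]
      have hbposZ : (0:ℤ) < (b:ℤ) := by exact_mod_cast hb
      have : (a:ℤ) * (b:ℤ) - (b:ℤ) * ((a:ℤ) - 1) = (b:ℤ) := by ring
      linarith
    · rw [minLvlPt, if_neg hscase] at hpair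
      have hf : (Q.take m).count false = s * a / b := congrArg Prod.fst hpair
      have ht : (Q.take m).count true = s := congrArg Prod.snd hpair
      rw [lvlAt, hf, ht]
      have hmod := Nat.div_add_mod (s * a) b
      have hr0 : s * a % b ≠ 0 := by
        intro h0
        have hdvd : b ∣ s * a := Nat.dvd_of_mod_eq_zero h0
        have hdt : b ∣ s := Nat.Coprime.dvd_of_dvd_mul_right hab.symm hdvd
        have := Nat.le_of_dvd (by omega) hdt
        omega
      have h1 : (b:ℤ) * ((s * a / b : ℕ) : ℤ) + ((s * a % b : ℕ) : ℤ)
          = (s:ℤ) * (a:ℤ) := by exact_mod_cast hmod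
      have h2 : (1:ℤ) ≤ ((s * a % b : ℕ) : ℤ) := by
        have : 1 ≤ s * a % b := by omega
        exact_mod_cast this
      have hc : (s:ℤ) * (a:ℤ) = (a:ℤ) * (s:ℤ) := mul_comm _ _
      linarith
end

section
/- Let a, b be coprime positive integers. Suppose the chip configuration D is 0-stable and the labeled path Q = lpath(D) arrives at the min-level point v_s (for some 1 ≤ s ≤ b) by an east step. Let S be the set of the s poorest vertices in D. Then the borrow move β_S is legal on D (i.e., β_S(D) ≥ 0), and the cyclic shift Q_{v_s} equals lpath(β_S(D)). -/
namespace BRW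

variable {b : ℕ}

/-- getD within range equals getElem -/
lemma getD_eq_get {α : Type*} (l : List α) (d : α) {n : ℕ} (h : n < l.length) :
    l.getD n d = l[n] := by
  rw [List.getD_eq_getElem?_getD, List.getElem?_eq_getElem h, Option.getD_some]

lemma lt_length_of_getD_some {l : List (Option (Fin b))} {n : ℕ} {i : Fin b}
    (h : l.getD n none = some i) : n < l.length := by
  by_contra hn
  rw [List.getD_eq_default _ _ (le_of_not_gt hn)] at h
  exact nomatch h

lemma getD_take {α : Type*} (l : List α) (d : α) {m p : ℕ} (h : p < m) :
    (l.take m).getD p d = l.getD p d := by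
  rw [List.getD_eq_getElem?_getD, List.getD_eq_getElem?_getD, List.getElem?_take, if_pos h]

lemma mem_of_getD {α : Type*} {l : List α} {d v : α} {n : ℕ} (h : l.getD n d = v) (hv : v ≠ d) :
    v ∈ l := by
  rcases lt_or_ge n l.length with hn | hn
  · rw [getD_eq_get _ _ hn] at h
    exact h ▸ List.getElem_mem hn
  · exact absurd ((List.getD_eq_default _ _ hn) ▸ h).symm hv

lemma count_unlabel_false (l : List (Option (Fin b))) :
    (unlabel l).count false = l.count none := by
  induction l with
  | nil => rfl
  | cons o t ih => cases o <;> simp only [unlabel, List.map_cons] at * <;> simp [List.count_cons, ih]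

lemma count_unlabel_true (l : List (Option (Fin b))) :
    (unlabel l).count true = l.countP (fun o => o.isSome) := by
  induction l with
  | nil => rfl
  | cons o t ih => cases o <;> simp only [unlabel, List.map_cons] at * <;> simp [List.count_cons, List.countP_cons, ih]

lemma length_eq_count_add_countP (l : List (Option (Fin b))) :
    l.length = l.count none + l.countP (fun o => o.isSome) := by
  induction l with
  | nil => rfl
  | cons o t ih => cases o <;> simp [List.count_cons, List.countP_cons, ih] <;> omega

lemma countP_isSome_eq_sum (l : List (Option (Fin b))) :
    l.countP (fun o => o.isSome) = ∑ i : Fin b, l.count (some i) := by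
  induction l with
  | nil => simp
  | cons o t ih =>
    cases o with
    | none => simpa [List.countP_cons, List.count_cons] using ih
    | some j =>
      simp only [List.countP_cons, List.count_cons, Option.isSome_some, if_pos, cond_true]
      rw [Finset.sum_add_distrib, ← ih]
      simp [Finset.sum_ite_eq]

lemma count_take_succ (l : List (Option (Fin b))) {r : ℕ} (h : r < l.length) :
    (l.take (r+1)).count none
      = (l.take r).count none + (if l.getD r none = none then 1 else 0) := by
  rw [List.take_succ, List.count_append, List.getElem?_eq_getElem h, getD_eq_get _ _ h]
  rcases h' : l[r] with _ | j <;> simp [h']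

lemma count_none_mono (l : List (Option (Fin b))) {p q : ℕ} (h : p ≤ q) :
    (l.take p).count none ≤ (l.take q).count none := by
  have : l.take p = (l.take q).take p := by rw [List.take_take, min_eq_left h]
  rw [this]
  exact (List.take_sublist _ _).count_le _


lemma count_rotate {α : Type*} [BEq α] (l : List α) (n : ℕ) (x : α) :
    (l.rotate n).count x = l.count x := by
  simpa [List.count] using (l.rotate_perm n).countP_eq (fun y => y == x)

lemma run_lt (L : List (Option (Fin b)))
    (hadj : ∀ m : ℕ, ∀ i j : Fin b, L.getD m none = some i → L.getD (m + 1) none = some j → i < j) :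
    ∀ (d p : ℕ) (i j : Fin b), L.getD p none = some i → L.getD (p + d + 1) none = some j →
      (∀ r, p < r → r < p + d + 1 → L.getD r none ≠ none) → i < j := by
  intro d
  induction d with
  | zero => intro p i j h1 h2 _; exact hadj p i j h1 h2
  | succ d ih =>
    intro p i j h1 h2 hmid
    rcases ho : L.getD (p+1) none with _ | k
    · exact absurd ho (hmid (p+1) (by omega) (by omega))
    · have hik : i < k := hadj p i k h1 ho
      have hkj : k < j := ih (p+1) k j ho
        (by rw [show p+1+d+1 = p+(d+1)+1 by omega]; exact h2)
        (fun r hr1 hr2 => hmid r (by omega) (by omega))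
      exact hik.trans hkj

lemma key_div (a b s : ℕ) (ha : 0 < a) (hb : 0 < b) (hab : Nat.Coprime a b)
    (hs : 1 ≤ s) (hsb : s < b) :
    s * a / b + (b - s) * a / b + 1 = a := by
  have h1 : b * (s * a / b) + s * a % b = s * a := Nat.div_add_mod _ _
  have h2 : b * ((b - s) * a / b) + (b - s) * a % b = (b - s) * a := Nat.div_add_mod _ _
  have hsum : s * a + (b - s) * a = b * a := by
    rw [← Nat.add_mul]
    congr 1
    omega
  have hr1b : s * a % b < b := Nat.mod_lt _ hb
  have hr2b : (b - s) * a % b < b := Nat.mod_lt _ hb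
  have hr1n : s * a % b ≠ 0 := by
    intro h
    have hd : b ∣ s * a := Nat.dvd_of_mod_eq_zero h
    have : b ∣ s := (Nat.Coprime.symm hab).dvd_of_dvd_mul_right hd
    have := Nat.le_of_dvd (by omega) this
    omega
  have hr2n : (b - s) * a % b ≠ 0 := by
    intro h
    have hd : b ∣ (b - s) * a := Nat.dvd_of_mod_eq_zero h
    have : b ∣ (b - s) := (Nat.Coprime.symm hab).dvd_of_dvd_mul_right hd
    have := Nat.le_of_dvd (by omega) this
    omega
  have hmod0 : (s * a % b + (b - s) * a % b) % b = 0 := by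
    rw [← Nat.add_mod, hsum, Nat.mul_mod_right]
  have hdvd : b ∣ s * a % b + (b - s) * a % b := Nat.dvd_of_mod_eq_zero hmod0
  have hge : b ≤ s * a % b + (b - s) * a % b := Nat.le_of_dvd (by omega) hdvd
  have hdvd2 : b ∣ (s * a % b + (b - s) * a % b) - b := Nat.dvd_sub hdvd dvd_rfl
  have heq0 : (s * a % b + (b - s) * a % b) - b = 0 :=
    Nat.eq_zero_of_dvd_of_lt hdvd2 (by omega)
  have hr12 : s * a % b + (b - s) * a % b = b := by omega
  have e2 : b * (s * a / b + (b - s) * a / b + 1) = b * a := by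
    have expand : b * (s * a / b + (b - s) * a / b + 1)
        = b * (s * a / b) + b * ((b - s) * a / b) + b := by ring
    rw [expand]
    linarith [h1, h2, hsum, hr12]
  exact Nat.eq_of_mul_eq_mul_left hb e2

end BRW

/-- if `D` is `0`-stable and `Q = lpath D` arrives at the
min-level point `v_s` by an east step, then the set `S` of the `s` poorest
vertices can legally borrow, and `Q_{v_s} = lpath (β_S D)`. -/
theorem borrow_is_cyclic_shift (a b : ℕ) (ha : 0 < a) (hb : 0 < b)
    (hab : a.Coprime b) (D : Fin b → ℤ) (h0 : KStable a b 0 D)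
    (L : List (Option (Fin b))) (hL : IsLpath a b D L)
    (s m : ℕ) (hs : 1 ≤ s) (hsb : s ≤ b)
    (harr : ArrivesByEast a b (unlabel L) s m)
    (S : Finset (Fin b)) (hcard : S.card = s)
    (hpoor : ∀ i ∈ S, ∀ j ∉ S, Poorer D i j) :
    (∀ i, 0 ≤ cborrow a b S D i) ∧ IsLpath a b (cborrow a b S D) (L.rotate m) := by
  classical
  obtain ⟨⟨hcntN, hcnt1, hadj⟩, hcol⟩ := hL
  obtain ⟨hm0, hmlen, hlastQ, hpt⟩ := harr
  have hD0 := h0.1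
  have hmlenL : m ≤ L.length := by simpa [unlabel] using hmlen
  have hlenL : L.length = a + b := by
    rw [BRW.length_eq_count_add_countP L, hcntN, BRW.countP_isSome_eq_sum]
    simp [hcnt1]
  have hQtake : (unlabel L).take m = unlabel (L.take m) := List.map_take.symm
  have hpt1 : ((unlabel L).take m).count false = (minLvlPt a b s).1 := congrArg Prod.fst hpt
  have hpt2 : ((unlabel L).take m).count true = (minLvlPt a b s).2 := congrArg Prod.snd hpt
  rw [hQtake, BRW.count_unlabel_false] at hpt1
  rw [hQtake, BRW.count_unlabel_true] at hpt2
  have hx : (L.take m).count none = if s = b then a - 1 else s * a / b := by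
    rw [hpt1]; unfold minLvlPt; split <;> rfl
  have hsom : (L.take m).countP (fun o => o.isSome) = s := by
    rw [hpt2]; unfold minLvlPt; split
    · simp; omega
    · rfl
  have hmxs : m = (L.take m).count none + s := by
    have h1 : (L.take m).length = m := by rw [List.length_take]; omega
    have h2 := BRW.length_eq_count_add_countP (L.take m)
    rw [hsom] at h2
    omega
  have hm1 : m - 1 < L.length := by omega
  have hlastm : L.getD (m-1) none = none := by
    have hm1' : m - 1 < (List.map Option.isSome L).length := by simpa using hm1
    rw [show unlabel L = List.map Option.isSome L from rfl,
      BRW.getD_eq_get _ _ hm1', List.getElem_map] at hlastQ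
    rw [BRW.getD_eq_get _ _ hm1]
    rcases h' : L[m-1] with _ | k
    · rfl
    · rw [h'] at hlastQ; simp at hlastQ
  -- order along the path
  have horder : ∀ p q (i j : Fin b), p < q → L.getD p none = some i →
      L.getD q none = some j → Poorer D i j := by
    intro p q i j hpq h1 h2
    have hDi := hcol p i h1
    have hDj := hcol q j h2
    have hmono := BRW.count_none_mono L (le_of_lt hpq)
    rcases lt_or_eq_of_le hmono with hlt | heq
    · left; rw [← hDi, ← hDj]; exact_mod_cast hlt
    · right
      refine ⟨by rw [← hDi, ← hDj]; exact_mod_cast heq, ?_⟩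
      have hq : q < L.length := BRW.lt_length_of_getD_some h2
      have hmid : ∀ r, p < r → r < q → L.getD r none ≠ none := by
        intro r hr1 hr2 hr
        have hrlen : r < L.length := by omega
        have e1 := BRW.count_take_succ L hrlen
        rw [if_pos hr] at e1
        have e2 := BRW.count_none_mono L (show p ≤ r by omega)
        have e3 := BRW.count_none_mono L (show r + 1 ≤ q by omega)
        omega
      exact BRW.run_lt L hadj (q - p - 1) p i j h1
        (by rw [show p + (q-p-1) + 1 = q by omega]; exact h2)
        (fun r h1' h2' => hmid r h1' (by omega))
  have huniq : ∀ p q (i : Fin b), L.getD p none = some i → L.getD q none = some i → p = q := by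
    intro p q i h1 h2
    by_contra hne
    rcases Ne.lt_or_gt hne with h | h
    · rcases horder p q i i h h1 h2 with h' | ⟨_, h'⟩
      · exact lt_irrefl _ h'
      · exact lt_irrefl _ h'
    · rcases horder q p i i h h2 h1 with h' | ⟨_, h'⟩
      · exact lt_irrefl _ h'
      · exact lt_irrefl _ h'
  have hex : ∀ i : Fin b, ∃ p, L.getD p none = some i := by
    intro i
    have hmem : some i ∈ L := List.count_pos_iff.mp (by rw [hcnt1 i]; omega)
    obtain ⟨n, hn, he⟩ := List.getElem_of_mem hmem
    exact ⟨n, by rw [BRW.getD_eq_get _ _ hn, he]⟩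
  choose pos hpos using hex
  have hind : ∀ i : Fin b, (L.take m).count (some i) = if pos i < m then 1 else 0 := by
    intro i
    by_cases h : pos i < m
    · rw [if_pos h]
      have hmem : some i ∈ L.take m :=
        BRW.mem_of_getD (by rw [BRW.getD_take L none h]; exact hpos i) (by simp)
      have h1 : 0 < (L.take m).count (some i) := List.count_pos_iff.mpr hmem
      have h2 : (L.take m).count (some i) ≤ 1 :=
        (hcnt1 i) ▸ (List.take_sublist m L).count_le (some i)
      omega
    · rw [if_neg h, List.count_eq_zero]
      intro hmem
      obtain ⟨n, hn, he⟩ := List.getElem_of_mem hmem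
      have hn' : n < m := lt_of_lt_of_le hn (by rw [List.length_take]; exact min_le_left _ _)
      have hg : L.getD n none = some i := by
        rw [← BRW.getD_take L none hn', BRW.getD_eq_get _ _ hn, he]
      exact h (by rw [← huniq n (pos i) i hg (hpos i)]; exact hn')
  have hTcard : (Finset.univ.filter (fun i : Fin b => pos i < m)).card = s := by
    rw [Finset.card_filter]
    have h1 := BRW.countP_isSome_eq_sum (L.take m)
    rw [hsom] at h1
    rw [show (∑ i : Fin b, if pos i < m then 1 else 0)
        = ∑ i : Fin b, (L.take m).count (some i) from
      Finset.sum_congr rfl (fun i _ => (hind i).symm)]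
    omega
  have hST : S = Finset.univ.filter (fun i : Fin b => pos i < m) := by
    apply Finset.eq_of_subset_of_card_le _ (by rw [hTcard, hcard])
    intro i hi
    simp only [Finset.mem_filter, Finset.mem_univ, true_and]
    by_contra hge
    have hiT : i ∉ Finset.univ.filter (fun i : Fin b => pos i < m) := by simp [hge]
    have hsub : ¬ (Finset.univ.filter (fun i : Fin b => pos i < m) ⊆ S) := by
      intro hsub
      have hsub2 : Finset.univ.filter (fun i : Fin b => pos i < m) ⊆ S.erase i :=
        fun j hj => Finset.mem_erase.mpr ⟨fun he => hiT (he ▸ hj), hsub hj⟩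
      have hc1 := Finset.card_le_card hsub2
      rw [hTcard] at hc1
      have hc2 := Finset.card_erase_of_mem hi
      omega
    obtain ⟨j, hjT, hjS⟩ := Finset.not_subset.mp hsub
    have hjm : pos j < m := (Finset.mem_filter.mp hjT).2
    have h1 := hpoor i hi j hjS
    have h2 := horder (pos j) (pos i) j i (by omega) (hpos j) (hpos i)
    simp only [Poorer, Fin.lt_def] at h1 h2
    omega
  have hposS : ∀ i : Fin b, i ∈ S ↔ pos i < m := by
    intro i; rw [hST]; simp
  -- upper bound on D from 0-stability
  have hDlt : ∀ i, D i < (a:ℤ) := by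
    intro i
    have h1 := h0.2 {i} (Finset.singleton_nonempty i) (by simp)
    push_neg at h1
    obtain ⟨j, hj⟩ := h1
    simp only [cfire, Finset.card_singleton, Finset.mem_singleton] at hj
    by_cases hji : j = i
    · rw [if_pos hji, hji] at hj
      have h2 : (b-1)*a < a*b := by
        rw [mul_comm a b]
        exact (Nat.mul_lt_mul_right ha).mpr (by omega)
      have hdiv : (b-1)*a/b < a := (Nat.div_lt_iff_lt_mul hb).mpr h2
      omega
    · rw [if_neg hji] at hj
      have := hD0 j
      have hc : (0:ℤ) ≤ ((1*a/b : ℕ):ℤ) := Int.natCast_nonneg _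
      omega
  -- key arithmetic
  have hF1 : (a:ℤ) - ((L.take m).count none : ℤ) = 1 + (((b - s) * a / b : ℕ) : ℤ) := by
    rcases eq_or_ne s b with hsb' | hsb'
    · have hc20 : (b - s)*a/b = 0 := by rw [hsb', Nat.sub_self, Nat.zero_mul, Nat.zero_div]
      rw [hx, if_pos hsb', hc20]
      omega
    · have hkey := BRW.key_div a b s ha hb hab hs (lt_of_le_of_ne hsb hsb')
      rw [hx, if_neg hsb']
      omega
  -- poor/rich column bounds
  have hDS : ∀ i, i ∈ S → D i < ((L.take m).count none : ℤ) := by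
    intro i hiS
    have hpi : pos i < m := (hposS i).mp hiS
    have hne : pos i ≠ m - 1 := by
      intro h
      have := hpos i
      rw [h, hlastm] at this
      exact nomatch this
    have e1 := BRW.count_none_mono L (show pos i ≤ m - 1 by omega)
    have e2 := BRW.count_take_succ L hm1
    rw [if_pos hlastm, show m - 1 + 1 = m by omega] at e2
    have e4 := hcol (pos i) i (hpos i)
    omega
  have hDnS : ∀ i, i ∉ S → ((L.take m).count none : ℤ) ≤ D i := by
    intro i hiS
    have hpi : ¬ pos i < m := fun h => hiS ((hposS i).mpr h)
    have e1 := BRW.count_none_mono L (show m ≤ pos i by omega)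
    have e2 := hcol (pos i) i (hpos i)
    omega
  have hSuniv : s = b → S = Finset.univ := by
    intro hsb'
    exact Finset.eq_univ_of_card S (by rw [hcard, hsb', Fintype.card_fin])
  have hnonneg : ∀ i, 0 ≤ cborrow a b S D i := by
    intro i
    simp only [cborrow, hcard]
    by_cases hi : i ∈ S
    · rw [if_pos hi]
      have := hD0 i
      have hc : (0:ℤ) ≤ (((b - s)*a/b : ℕ):ℤ) := Int.natCast_nonneg _
      omega
    · rw [if_neg hi]
      rcases eq_or_ne s b with hsb' | hsb'
      · exact absurd (hSuniv hsb' ▸ Finset.mem_univ i) hi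
      · have hxc1 : (L.take m).count none = s*a/b := by rw [hx, if_neg hsb']
        have := hDnS i hi
        omega
  -- rotation facts
  have hrot : L.rotate m = L.drop m ++ L.take m := List.rotate_eq_drop_append_take hmlenL
  have hdrop_len : (L.drop m).length = L.length - m := List.length_drop
  have hdropcnt : (L.take m).count none + (L.drop m).count none = a := by
    have hcc : (L.take m ++ L.drop m).count none = (L.take m).count none + (L.drop m).count none := List.count_append
    rw [List.take_append_drop, hcntN] at hcc
    omega
  have hRget1 : ∀ p, p < L.length - m → (L.rotate m).getD p none = L.getD (m + p) none := by
    intro p hp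
    rw [hrot, List.getD_eq_getElem?_getD, List.getElem?_append,
      if_pos (by rw [hdrop_len]; exact hp), List.getElem?_drop, ← List.getD_eq_getElem?_getD]
  have hRget2 : ∀ p, L.length - m ≤ p → p < L.length →
      (L.rotate m).getD p none = L.getD (p - (L.length - m)) none := by
    intro p hp1 hp2
    rw [hrot, List.getD_eq_getElem?_getD,
      List.getElem?_append_right (by rw [hdrop_len]; exact hp1), hdrop_len,
      List.getElem?_take, if_pos (by omega), ← List.getD_eq_getElem?_getD]
  have hRt1 : ∀ p, p ≤ L.length - m →
      (L.take m).count none + ((L.rotate m).take p).count none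
        = (L.take (m+p)).count none := by
    intro p hp
    rw [hrot, List.take_append_of_le_length (by rw [hdrop_len]; exact hp),
      List.take_add, List.count_append]
  have hRt2 : ∀ p, L.length - m ≤ p → p ≤ L.length →
      ((L.rotate m).take p).count none
        = (L.drop m).count none + (L.take (p - (L.length - m))).count none := by
    intro p hp1 hp2
    have hpe : p = (L.drop m).length + (p - (L.length - m)) := by rw [hdrop_len]; omega
    rw [hrot]
    conv_lhs => rw [hpe, List.take_append]
    rw [List.count_append, List.take_of_length_le (Nat.le_add_right _ _), List.take_take, Nat.add_sub_cancel_left,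
      min_eq_left (show p - (L.length - m) ≤ m by omega)]
  have hlastL : L.getD (L.length - 1) none = none := by
    rcases h' : L.getD (L.length - 1) none with _ | i
    · rfl
    · have hlen1 : L.length - 1 < L.length := by omega
      have hc1 := hcol (L.length - 1) i h'
      have e2 := BRW.count_take_succ L hlen1
      rw [if_neg (by rw [h']; simp), show L.length - 1 + 1 = L.length by omega,
        List.take_length, hcntN] at e2
      have := hDlt i
      omega
  refine ⟨hnonneg, ⟨⟨?_, ?_, ?_⟩, ?_⟩⟩
  · exact (BRW.count_rotate L m none).trans hcntN
  · intro i; exact (BRW.count_rotate L m (some i)).trans (hcnt1 i)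
  · -- adjacency
    intro p i j h1 h2
    have hp1 : p + 1 < L.length := by
      by_contra hc
      have hlen : (L.rotate m).length ≤ p + 1 := by rw [List.length_rotate]; omega
      rw [List.getD_eq_default _ _ hlen] at h2
      exact nomatch h2
    rcases Nat.lt_trichotomy (p+1) (L.length - m) with hc | hc | hc
    · rw [hRget1 p (by omega)] at h1
      rw [hRget1 (p+1) hc] at h2
      exact hadj (m+p) i j h1 (by rw [show m+p+1 = m+(p+1) by omega]; exact h2)
    · rw [hRget1 p (by omega)] at h1
      rw [show m + p = L.length - 1 by omega, hlastL] at h1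
      exact nomatch h1
    · rw [hRget2 p (by omega) (by omega)] at h1
      rw [hRget2 (p+1) (by omega) hp1] at h2
      rw [show p + 1 - (L.length - m) = (p - (L.length - m)) + 1 by omega] at h2
      exact hadj (p - (L.length - m)) i j h1 h2
  · -- columns
    intro p i h
    have hpR : p < L.length := by
      by_contra hc
      have hlen : (L.rotate m).length ≤ p := by rw [List.length_rotate]; omega
      rw [List.getD_eq_default _ _ hlen] at h
      exact nomatch h
    rcases Nat.lt_or_ge p (L.length - m) with hc | hc
    · rw [hRget1 p hc] at h
      have hpi : pos i = m + p := huniq (pos i) (m+p) i (hpos i) h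
      have hiS : i ∉ S := fun hiS => by have := (hposS i).mp hiS; omega
      have hsb' : s ≠ b := fun hsb' => hiS (hSuniv hsb' ▸ Finset.mem_univ i)
      have hxc1 : (L.take m).count none = s*a/b := by rw [hx, if_neg hsb']
      have hcolv := hcol (m+p) i h
      have ht := hRt1 p (le_of_lt hc)
      simp only [cborrow, if_neg hiS, hcard]
      omega
    · rw [hRget2 p hc hpR] at h
      have hpi : pos i = p - (L.length - m) := huniq _ _ i (hpos i) h
      have hiS : i ∈ S := (hposS i).mpr (by omega)
      have hcolv := hcol (p - (L.length - m)) i h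
      have ht := hRt2 p hc (le_of_lt hpR)
      simp only [cborrow, if_pos hiS, hcard]
      omega
end

section
/- Let a, b be coprime positive integers and fix k with 0 ≤ k < b. Let D be a k-stable chip configuration with labeled path Q = lpath(D). Then D is not k-skeletal if and only if there exists s ∈ {1,…,b} such that Q arrives at the min-level point v_s by an east step, the borrow move β_S is legal on D, and β_S(D) is k-stable, where S is the set of the s poorest vertices in D. -/
lemma count_take_mono {α : Type*} [BEq α] (l : List α) (x : α) {q p : ℕ} (h : q ≤ p) :
    (l.take q).count x ≤ (l.take p).count x := by
  have hq : l.take q = (l.take p).take q := by rw [List.take_take, Nat.min_eq_left h]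
  rw [hq]
  exact ((l.take p).take_sublist q).count_le x

lemma len_count {b : ℕ} (l : List (Option (Fin b))) :
    l.length = l.count none + l.countP (·.isSome) := by
  induction l with
  | nil => rfl
  | cons o t ih =>
    cases o <;> simp [List.count_cons, List.countP_cons, ih] <;> omega

lemma countP_isSome_eq_sum {b : ℕ} (l : List (Option (Fin b))) :
    l.countP (·.isSome) = ∑ i : Fin b, l.count (some i) := by
  induction l with
  | nil => simp
  | cons o t ih =>
    cases o with
    | none => simpa [List.countP_cons, List.count_cons] using ih
    | some j =>
      simp only [List.countP_cons, List.count_cons, ih]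
      simp [Finset.sum_add_distrib]

lemma unlabel_count_true {b : ℕ} (l : List (Option (Fin b))) :
    (unlabel l).count true = l.countP (·.isSome) := by
  rw [unlabel, List.count, List.countP_map]
  apply List.countP_congr
  intro o _; cases o <;> simp

lemma unlabel_count_false {b : ℕ} (l : List (Option (Fin b))) :
    (unlabel l).count false = l.count none := by
  rw [unlabel, List.count, List.countP_map, List.count]
  apply List.countP_congr
  intro o _; cases o <;> simp

lemma unlabel_take {b : ℕ} (l : List (Option (Fin b))) (m : ℕ) :
    (unlabel l).take m = unlabel (l.take m) := (List.map_take ..).symm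

-- count of some i before its position is 0
lemma count_take_self {b : ℕ} {L : List (Option (Fin b))} (h1 : ∀ i : Fin b, L.count (some i) = 1)
    {p : ℕ} (hp : p < L.length) {i : Fin b} (hi : L[p] = some i) :
    (L.take p).count (some i) = 0 := by
  have hsplit : (L.take p).count (some i) + (L.drop p).count (some i) = 1 := by
    rw [← List.count_append, List.take_append_drop]; exact h1 i
  have hdrop : L.drop p = some i :: L.drop (p + 1) := by
    rw [List.drop_eq_getElem_cons hp, hi]
  rw [hdrop] at hsplit
  simp [List.count_cons] at hsplit
  omega

lemma count_take_pos {b : ℕ} {L : List (Option (Fin b))}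
    {p : ℕ} (hp : p < L.length) {i : Fin b} (hi : L[p] = some i) {q : ℕ} (hq : p < q) :
    1 ≤ (L.take q).count (some i) := by
  have hmem : some i ∈ L.take q := by
    rw [List.mem_iff_getElem]
    refine ⟨p, ?_, ?_⟩
    · simpa [List.length_take] using ⟨hq, hp⟩
    · simp [List.getElem_take, hi]
  exact List.count_pos_iff.mpr hmem

lemma main_path {a b : ℕ} {D : Fin b → ℤ} {L : List (Option (Fin b))}
    (hLab : IsLabeled a b L)
    (hcol : ∀ m : ℕ, ∀ i : Fin b, L.getD m none = some i → ((L.take m).count none : ℤ) = D i)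
    (T : Finset (Fin b)) (hTne : T.Nonempty) (hTs : T.card ≤ b)
    (u' : ℕ) (hua : u' ≤ a)
    (hT1 : ∀ i ∈ T, D i + 1 ≤ (u' : ℤ))
    (hT2 : ∀ j ∉ T, (u' : ℤ) ≤ D j)
    (hmin : (u', T.card) = minLvlPt a b T.card) :
    ArrivesByEast a b (unlabel L) T.card (u' + T.card) := by
  set s := T.card with hs
  have hs1 : 1 ≤ s := Finset.card_pos.mpr hTne
  have hcount1 := hLab.2.1
  have hlen : L.length = a + b := by
    have h1 := len_count L
    rw [countP_isSome_eq_sum, hLab.1] at h1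
    simp only [hcount1] at h1
    simpa using h1
  set m := u' + s with hm
  have hmlen : m ≤ L.length := by omega
  -- position formula
  have hpos : ∀ (p : ℕ) (hp : p < L.length), ∀ i : Fin b, L[p] = some i →
      (p : ℤ) = D i + ((L.take p).countP (·.isSome) : ℤ) := by
    intro p hp i hi
    have he := hcol p i (by rw [List.getD_eq_getElem _ _ hp, hi])
    have hl := len_count (L.take p)
    rw [List.length_take, Nat.min_eq_left (le_of_lt hp)] at hl
    rw [← he]
    exact_mod_cast hl
  -- getD from getElem
  have hgetD : ∀ (p : ℕ) (hp : p < L.length), ∀ i : Fin b, L[p] = some i → L.getD p none = some i := by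
    intro p hp i hi
    rw [List.getD_eq_getElem _ _ hp, hi]
  -- C1 : norths labeled in T are early
  have hC1 : ∀ (p : ℕ) (hp : p < L.length), ∀ i : Fin b, L[p] = some i → i ∈ T →
      (p : ℤ) + 2 ≤ (u' : ℤ) + s := by
    intro p hp i hi hiT
    have hn : (L.take p).countP (·.isSome) ≤ s - 1 := by
      rw [countP_isSome_eq_sum]
      have hbound : ∀ j : Fin b, (L.take p).count (some j) ≤ if j ∈ T.erase i then 1 else 0 := by
        intro j
        by_cases hjT : j ∈ T.erase i
        · simp only [hjT, if_true]
          exact le_trans ((L.take_sublist p).count_le (some j)) (le_of_eq (hcount1 j))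
        · simp only [hjT, if_false, Nat.le_zero]
          by_cases hji : j = i
          · subst hji; exact count_take_self hcount1 hp hi
          · have hjT' : j ∉ T := fun hmem => hjT (Finset.mem_erase.mpr ⟨hji, hmem⟩)
            by_contra hpos0
            obtain ⟨q, hq, hjq⟩ := List.mem_iff_getElem.mp
              (List.count_pos_iff.mp (Nat.pos_of_ne_zero hpos0))
            have hqlen : q < L.length := lt_of_lt_of_le hq (by rw [List.length_take]; omega)
            have hq1 : q < p := lt_of_lt_of_le hq (by rw [List.length_take]; omega)
            have hjq' : L[q] = some j := by
              rw [List.getElem_take] at hjq; exact hjq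
            have hDj := hcol q j (hgetD q hqlen j hjq')
            have hDi := hcol p i (hgetD p hp i hi)
            have hmono := count_take_mono L none (le_of_lt hq1)
            have h2 := hT2 j hjT'
            have h1 := hT1 i hiT
            have : ((L.take q).count none : ℤ) ≤ ((L.take p).count none : ℤ) := by
              exact_mod_cast hmono
            rw [hDj, hDi] at this
            linarith
      calc ∑ j : Fin b, (L.take p).count (some j)
          ≤ ∑ j : Fin b, (if j ∈ T.erase i then 1 else 0) := Finset.sum_le_sum fun j _ => hbound j
        _ = (T.erase i).card := by
            rw [Finset.sum_ite_mem, Finset.univ_inter]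
            exact (Finset.card_eq_sum_ones _).symm
        _ = s - 1 := by rw [Finset.card_erase_of_mem hiT]
    have hp' := hpos p hp i hi
    have hDi := hT1 i hiT
    have hn' : ((L.take p).countP (·.isSome) : ℤ) ≤ (s : ℤ) - 1 := by
      have : ((L.take p).countP (·.isSome)) ≤ s - 1 := hn
      omega
    linarith
  -- C2 : norths not labeled in T are late
  have hC2 : ∀ (p : ℕ) (hp : p < L.length), ∀ i : Fin b, L[p] = some i → i ∉ T →
      (u' : ℤ) + s ≤ (p : ℤ) := by
    intro p hp i hi hiT
    have hn : s ≤ (L.take p).countP (·.isSome) := by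
      rw [countP_isSome_eq_sum]
      have hbound : ∀ j ∈ T, 1 ≤ (L.take p).count (some j) := by
        intro j hjT
        obtain ⟨q, hqlen, hjq⟩ := List.getElem_of_mem
          (List.count_pos_iff.mp (by rw [hcount1 j]; norm_num))
        have hqp : q < p := by
          by_contra hle
          push_neg at hle
          have hmono := count_take_mono L none hle
          have hDj := hcol q j (hgetD q hqlen j hjq)
          have hDi := hcol p i (hgetD p hp i hi)
          have h1 := hT1 j hjT
          have h2 := hT2 i hiT
          have : ((L.take p).count none : ℤ) ≤ ((L.take q).count none : ℤ) := by
            exact_mod_cast hmono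
          rw [hDj, hDi] at this
          linarith
        exact count_take_pos hqlen hjq hqp
      calc s = ∑ j ∈ T, 1 := by simp [hs]
        _ ≤ ∑ j ∈ T, (L.take p).count (some j) := Finset.sum_le_sum hbound
        _ ≤ ∑ j : Fin b, (L.take p).count (some j) :=
            Finset.sum_le_sum_of_subset_of_nonneg T.subset_univ (by intros; positivity)
    have hp' := hpos p hp i hi
    have h2 := hT2 i hiT
    have hn' : (s : ℤ) ≤ ((L.take p).countP (·.isSome) : ℤ) := by exact_mod_cast hn
    linarith
  -- counts in take m
  have hcount : ∀ j : Fin b, (L.take m).count (some j) = if j ∈ T then 1 else 0 := by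
    intro j
    by_cases hjT : j ∈ T
    · simp only [hjT, if_true]
      obtain ⟨q, hqlen, hjq⟩ := List.getElem_of_mem
        (List.count_pos_iff.mp (by rw [hcount1 j]; norm_num))
      have hqm : q < m := by
        have := hC1 q hqlen j hjq hjT
        omega
      refine le_antisymm ?_ (count_take_pos hqlen hjq hqm)
      exact le_trans ((L.take_sublist m).count_le (some j)) (le_of_eq (hcount1 j))
    · simp only [hjT, if_false]
      by_contra hpos0
      obtain ⟨q, hq, hjq⟩ := List.mem_iff_getElem.mp
        (List.count_pos_iff.mp (Nat.pos_of_ne_zero hpos0))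
      have hqlen : q < L.length := lt_of_lt_of_le hq (by rw [List.length_take]; omega)
      have hqm : q < m := lt_of_lt_of_le hq (by rw [List.length_take]; omega)
      have hjq' : L[q] = some j := by rw [List.getElem_take] at hjq; exact hjq
      have := hC2 q hqlen j hjq' hjT
      omega
  have hcp : (L.take m).countP (·.isSome) = s := by
    rw [countP_isSome_eq_sum]
    simp only [hcount]
    rw [Finset.sum_ite_mem, Finset.univ_inter]
    exact (Finset.card_eq_sum_ones T).symm
  have hnone : (L.take m).count none = u' := by
    have hl := len_count (L.take m)
    rw [List.length_take, Nat.min_eq_left hmlen, hcp] at hl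
    omega
  have hm1 : m - 1 < L.length := by omega
  have heast : L[m - 1] = none := by
    cases h' : L[m - 1] with
    | none => rfl
    | some i =>
      exfalso
      by_cases hiT : i ∈ T
      · have := hC1 (m - 1) hm1 i h' hiT; omega
      · have := hC2 (m - 1) hm1 i h' hiT; omega
  have hulen : (unlabel L).length = L.length := by simp [unlabel]
  refine ⟨by omega, by omega, ?_, ?_⟩
  · rw [List.getD_eq_getElem _ _ (by omega : m - 1 < (unlabel L).length)]
    show (L.map Option.isSome)[m-1]'(by rw [List.length_map]; exact hm1) = false
    rw [List.getElem_map, heast]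
    rfl
  · rw [unlabel_take, unlabel_count_false, unlabel_count_true, hnone, hcp]
    exact hmin

lemma arith1 {a b s : ℕ} (ha : 0 < a) (hb : 0 < b) (hs1 : 1 ≤ s) (hsb : s ≤ b) :
    (b - 1) * a / b ≤ (b - s) * a / b + (if s = b then a - 1 else s * a / b) := by
  have ht1 : (b - 1) * a / b ≤ a - 1 := by
    have h1 : (b - 1) * a / b < a := by
      rw [Nat.div_lt_iff_lt_mul hb]
      have : b - 1 < b := by omega
      calc (b - 1) * a < b * a := Nat.mul_lt_mul_of_lt_of_le this (le_refl a) ha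
        _ = a * b := Nat.mul_comm b a
    omega
  by_cases hse : s = b
  · subst hse
    simp only [if_pos rfl, Nat.sub_self, Nat.zero_mul, Nat.zero_div, if_true, eq_self_iff_true]
    omega
  · rw [if_neg hse]
    have hsum : (b - s) * a + s * a = b * a := by
      rw [← Nat.add_mul]; congr 1; omega
    have hdiv : b * a / b = a := Nat.mul_div_cancel_left a hb
    have hadd := Nat.add_div (a := (b - s) * a) (b := s * a) hb
    rw [hsum, hdiv] at hadd
    have : (if b ≤ (b - s) * a % b + s * a % b then 1 else 0) ≤ 1 := by split <;> omega
    omega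

lemma arith2 {a b s : ℕ} (ha : 0 < a) (hb : 0 < b) (hsb : s ≤ b) :
    (if s = b then a - 1 else s * a / b) ≤ a := by
  split
  · omega
  · calc s * a / b ≤ b * a / b := Nat.div_le_div_right (Nat.mul_le_mul_right a hsb)
      _ = a := Nat.mul_div_cancel_left a hb

/-- a `k`-stable configuration `D` with `Q = lpath D` fails to be
`k`-skeletal iff for some `s`, `Q` arrives at `v_s` by an east step and the
borrow move at the set `S` of the `s` poorest vertices is legal with `β_S D`
`k`-stable. -/
theorem not_kSkeletal_iff (a b k : ℕ) (ha : 0 < a) (hb : 0 < b)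
    (hab : a.Coprime b) (hk : k < b) (D : Fin b → ℤ) (hst : KStable a b k D)
    (L : List (Option (Fin b))) (hL : IsLpath a b D L) :
    ¬ KSkeletal a b k D ↔
      ∃ s m : ℕ, 1 ≤ s ∧ s ≤ b ∧ ArrivesByEast a b (unlabel L) s m ∧
        ∃ S : Finset (Fin b), S.card = s ∧ (∀ i ∈ S, ∀ j ∉ S, Poorer D i j) ∧
          (∀ i, 0 ≤ cborrow a b S D i) ∧ KStable a b k (cborrow a b S D) := by
  obtain ⟨hLab, hcol⟩ := hL
  constructor
  · intro hns
    have hex : ∃ T : Finset (Fin b), T.Nonempty ∧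
        (∀ i, 0 ≤ cborrow a b T D i) ∧ KStable a b k (cborrow a b T D) := by
      by_contra hno
      push_neg at hno
      exact hns ⟨hst, fun T hTne hleg => hno T hTne hleg⟩
    obtain ⟨T, hTne, hTleg, hTstab⟩ := hex
    have hs1 : 1 ≤ T.card := Finset.card_pos.mpr hTne
    have hsb : T.card ≤ b := le_trans (Finset.card_le_univ T) (by simp)
    set s := T.card with hs
    set u' := if s = b then a - 1 else s * a / b with hu'
    have hT1 : ∀ i ∈ T, D i + 1 ≤ (u' : ℤ) := by
      intro i hiT
      have hsing := hTstab.2 {i} (Finset.singleton_nonempty i) (by simp)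
      push_neg at hsing
      obtain ⟨j, hj⟩ := hsing
      have hji : j = i := by
        by_contra hne
        have hjne : j ∉ ({i} : Finset (Fin b)) := by simp [hne]
        rw [cfire, if_neg hjne] at hj
        have h0 := hTstab.1 j
        have : (0 : ℤ) ≤ ((Finset.card {i} * a / b : ℕ) : ℤ) := Int.natCast_nonneg _
        linarith
      subst hji
      rw [cfire, if_pos (Finset.mem_singleton_self j)] at hj
      rw [cborrow, if_pos hiT] at hj
      rw [Finset.card_singleton] at hj
      rw [← hs] at hj
      have harith := arith1 ha hb hs1 hsb (a := a)
      have harith' : (((b - 1) * a / b : ℕ) : ℤ) ≤ (((b - s) * a / b : ℕ) : ℤ) + (u' : ℤ) := by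
        rw [hu']
        exact_mod_cast harith
      linarith
    have hT2 : ∀ j ∉ T, (u' : ℤ) ≤ D j := by
      intro j hjT
      by_cases hse : s = b
      · exfalso
        apply hjT
        have : T = Finset.univ := by
          apply Finset.eq_univ_of_card
          rw [← hs, hse, Fintype.card_fin]
        rw [this]
        exact Finset.mem_univ j
      · have hlegj := hTleg j
        rw [cborrow, if_neg hjT] at hlegj
        rw [hu', if_neg hse]
        linarith
    have hua : u' ≤ a := by rw [hu']; exact arith2 ha hb hsb
    have hmin : (u', s) = minLvlPt a b s := by
      rw [minLvlPt, hu']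
      by_cases hse : s = b
      · rw [if_pos hse, if_pos hse, hse]
      · rw [if_neg hse, if_neg hse]
    have harr := main_path hLab hcol T hTne hsb u' hua hT1 hT2 hmin
    refine ⟨s, u' + s, hs1, hsb, harr, T, rfl, ?_, hTleg, hTstab⟩
    intro i hiT j hjT
    left
    have h1 := hT1 i hiT
    have h2 := hT2 j hjT
    linarith
  · rintro ⟨s, m, hs1, hsb, harr, S, hScard, hpoor, hleg, hstab⟩ ⟨_, hall⟩
    exact hall S (Finset.card_pos.mp (by omega)) hleg hstab
end
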